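/- arXiv:2501.09471 — 9 statements merged into one kernel-verified Lean document; each statement's English description precedes it below -/
import Mathlib

section
/- For every constant specification CS for LPC⁺ and every formula φ, both counterpossible schemes are LPC⁺_CS-valid: ⊨_{LPC⁺_CS} ⊥ > φ and ⊨_{LPC⁺_CS} φ > ⊤ (where ⊥ := φ∧¬φ and ⊤ := ¬⊥). -/
namespace LPCplus

/-- Justification terms: constants, variables, application, sum, proof checker. -/
inductive Tm : Type
  | const : ℕ → Tm
  | var   : ℕ → Tm
  | app   : Tm → Tm → Tm
  | sum   : Tm → Tm → Tm
  | bang  : Tm → Tm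
  deriving DecidableEq

/-- Formulas of LPC⁺. -/
inductive Fm : Type
  | atom : ℕ → Fm
  | neg  : Fm → Fm
  | and  : Fm → Fm → Fm
  | imp  : Fm → Fm → Fm
  | cond : Fm → Fm → Fm   -- the counterfactual conditional `>`
  | box  : Tm → Fm → Fm   -- justification assertion `[t]φ`
  deriving DecidableEq

/-- A classical propositional tautology in the language of LPC⁺: true under every
boolean valuation of formulas that respects the classical connectives ¬, ∧, ⊃. -/
def IsTaut (φ : Fm) : Prop :=
  ∀ v : Fm → Bool,
    (∀ ψ, v (Fm.neg ψ) = !(v ψ)) →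
    (∀ ψ χ, v (Fm.and ψ χ) = (v ψ && v χ)) →
    (∀ ψ χ, v (Fm.imp ψ χ) = (!(v ψ) || v χ)) →
    v φ = true

/-- Axioms of LPC⁺. -/
inductive Ax : Fm → Prop
  | taut (φ : Fm) : IsTaut φ → Ax φ
  | a2 (φ ψ χ : Fm) : Ax ((φ.cond (ψ.imp χ)).imp ((φ.cond ψ).imp (φ.cond χ)))
  | a3 (φ : Fm) : Ax (φ.cond φ)
  | a4 (φ ψ : Fm) : Ax ((φ.cond ψ).imp (φ.imp ψ))
  | a5 (s t : Tm) (φ ψ : Fm) :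
      Ax (((Fm.box s (φ.cond ψ)).and (Fm.box t φ)).cond (Fm.box (s.app t) ψ))
  | a6 (s t : Tm) (φ : Fm) : Ax ((Fm.box s φ).cond (Fm.box (s.sum t) φ))
  | a7 (s t : Tm) (φ : Fm) : Ax ((Fm.box t φ).cond (Fm.box (s.sum t) φ))
  | a8 (t : Tm) (φ : Fm) : Ax ((Fm.box t φ).cond φ)
  | a9 (t : Tm) (φ : Fm) : Ax ((Fm.box t φ).cond (Fm.box t.bang (Fm.box t φ)))

/-- A constant specification: a set of formulas `[c]φ` with `φ` an axiom instance. -/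
def IsCS (CS : Set Fm) : Prop :=
  ∀ χ ∈ CS, ∃ (c : ℕ) (φ : Fm), χ = Fm.box (Tm.const c) φ ∧ Ax φ

/-- Derivability in LPC⁺_CS. -/
inductive Prv (CS : Set Fm) : Fm → Prop
  | ax  {φ} : Ax φ → Prv CS φ
  | cs  {φ} : φ ∈ CS → Prv CS φ
  | mp  {φ ψ} : Prv CS (φ.imp ψ) → Prv CS φ → Prv CS ψ
  | rcn (φ : Fm) {ψ} : Prv CS ψ → Prv CS (φ.cond ψ)

/-- ⊥ := φ ∧ ¬φ (a fixed instance). -/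
def botF : Fm := (Fm.atom 0).and (Fm.neg (Fm.atom 0))

/-- ⊤ := ¬⊥. -/
def topF : Fm := Fm.neg botF

/-- Conjunction ψ₁ ∧ ⋯ ∧ ψₙ of a list (⊤ for the empty list). -/
def listConj : List Fm → Fm
  | [] => topF
  | ψ :: l => l.foldl Fm.and ψ

/-- T ⊢_{LPC⁺_CS} φ iff ⊢_{LPC⁺_CS} (ψ₁ ∧ ⋯ ∧ ψₙ) ⊃ φ for some ψ₁,…,ψₙ ∈ T. -/
def Deriv (CS : Set Fm) (T : Set Fm) (φ : Fm) : Prop :=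
  ∃ l : List Fm, (∀ ψ ∈ l, ψ ∈ T) ∧ Prv CS ((listConj l).imp φ)

def Consis (CS : Set Fm) (T : Set Fm) : Prop := ¬ Deriv CS T botF

/-- Maximal LPC⁺_CS-consistent sets. -/
def MCS (CS : Set Fm) (Γ : Set Fm) : Prop :=
  Consis CS Γ ∧ ∀ Δ, Consis CS Δ → Γ ⊆ Δ → Δ = Γ

/-- A relational model. -/
structure Model where
  W : Type
  N : Set W
  Rf : Fm → W → W → Prop
  Rf_norm : ∀ φ w v, Rf φ w v → w ∈ N ∧ v ∈ N   -- R_φ is a relation on W_N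
  Rt : Tm → W → W → Prop
  Vn : W → Set ℕ     -- valuation at normal states (sets of atoms)
  Vf : W → Set Fm    -- valuation at non-normal states (sets of formulas)

/-- Truth at a state. -/
def Sat (M : Model) : Fm → M.W → Prop
  | .atom p, w => (w ∈ M.N ∧ p ∈ M.Vn w) ∨ (w ∉ M.N ∧ Fm.atom p ∈ M.Vf w)
  | .neg φ, w => (w ∈ M.N ∧ ¬ Sat M φ w) ∨ (w ∉ M.N ∧ Fm.neg φ ∈ M.Vf w)
  | .and φ ψ, w => (w ∈ M.N ∧ Sat M φ w ∧ Sat M ψ w) ∨ (w ∉ M.N ∧ Fm.and φ ψ ∈ M.Vf w)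
  | .imp φ ψ, w => (w ∈ M.N ∧ (Sat M φ w → Sat M ψ w)) ∨ (w ∉ M.N ∧ Fm.imp φ ψ ∈ M.Vf w)
  | .cond φ ψ, w =>
      (w ∈ M.N ∧ ∀ v, M.Rf φ w v → Sat M ψ v) ∨ (w ∉ M.N ∧ Fm.cond φ ψ ∈ M.Vf w)
  | .box t φ, w =>
      (w ∈ M.N ∧ ∀ v, M.Rt t w v → Sat M φ v) ∨ (w ∉ M.N ∧ Fm.box t φ ∈ M.Vf w)

/-- Conditions (C1)–(C7) making a relational model an LPC⁺_CS-model. -/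
def IsModel (CS : Set Fm) (M : Model) : Prop :=
  (∀ φ (w v : M.W), w ∈ M.N → M.Rf φ w v → Sat M φ v) ∧
  (∀ φ (w : M.W), w ∈ M.N → Sat M φ w → M.Rf φ w w) ∧
  (∀ (c : ℕ) φ, Fm.box (Tm.const c) φ ∈ CS →
      ∀ (w v : M.W), w ∈ M.N → M.Rt (Tm.const c) w v → Sat M φ v) ∧
  (∀ (s t : Tm) (w v : M.W), w ∈ M.N → M.Rt (s.sum t) w v → M.Rt s w v ∧ M.Rt t w v) ∧
  (∀ (s t : Tm) (w v : M.W), w ∈ M.N → M.Rt (s.app t) w v →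
      ∀ φ ψ, Sat M ((Fm.box s (φ.cond ψ)).and (Fm.box t φ)) w → Sat M ψ v) ∧
  (∀ (t : Tm) (w : M.W), w ∈ M.N → M.Rt t w w) ∧
  (∀ (t : Tm) (w v u : M.W), w ∈ M.N → M.Rt t.bang w v → M.Rt t v u → M.Rt t w u)

/-- LPC⁺_CS-validity. -/
def Valid (CS : Set Fm) (φ : Fm) : Prop :=
  ∀ M : Model, IsModel CS M → ∀ w ∈ M.N, Sat M φ w

/-- Local semantic consequence. -/
def Conseq (CS : Set Fm) (T : Set Fm) (φ : Fm) : Prop :=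
  ∀ M : Model, IsModel CS M → ∀ w ∈ M.N, (∀ ψ ∈ T, Sat M ψ w) → Sat M φ w

/-- Material equivalence φ ≡ ψ. -/
def eqv (φ ψ : Fm) : Fm := (φ.imp ψ).and (ψ.imp φ)

/-- Counterfactual biconditional φ ⇔ ψ. -/
def condEqv (φ ψ : Fm) : Fm := (φ.cond ψ).and (ψ.cond φ)

/-- Disjunction φ ∨ ψ := ¬(¬φ ∧ ¬ψ). -/
def orF (φ ψ : Fm) : Fm := Fm.neg ((Fm.neg φ).and (Fm.neg ψ))

/-- The canonical relational model for LPC⁺_CS. -/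
def canonical (CS : Set Fm) : Model where
  W := Set Fm
  N := {Γ | MCS CS Γ}
  Rf φ Γ Δ := MCS CS Γ ∧ MCS CS Δ ∧ {ψ | Fm.cond φ ψ ∈ Γ} ⊆ Δ
  Rf_norm := fun _ _ _ h => ⟨h.1, h.2.1⟩
  Rt t Γ Δ := {ψ | Fm.box t ψ ∈ Γ} ⊆ Δ
  Vn Γ := {p | Fm.atom p ∈ Γ}
  Vf Γ := Γ

end LPCplus

open LPCplus in
/-- Counterpossibles are valid: ⊨_{LPC⁺_CS} ⊥ > φ and ⊨_{LPC⁺_CS} φ > ⊤,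
where ⊥ := χ ∧ ¬χ and ⊤ := ¬⊥. -/
theorem stmt_2 (CS : Set Fm) (hCS : IsCS CS) (φ χ : Fm) :
    Valid CS ((χ.and χ.neg).cond φ) ∧ Valid CS (φ.cond (Fm.neg (χ.and χ.neg))) := by
  constructor
  · intro M hM w hw
    refine Or.inl ⟨hw, fun v hv => ?_⟩
    have hvN := (M.Rf_norm _ _ _ hv).2
    have hsat := hM.1 _ _ _ hw hv
    rcases hsat with ⟨hvN', hχ, hnχ⟩ | ⟨hvN', _⟩
    · rcases hnχ with ⟨_, hn⟩ | ⟨h, _⟩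
      · exact absurd hχ hn
      · exact absurd hvN' h
    · exact absurd hvN hvN'
  · intro M hM w hw
    refine Or.inl ⟨hw, fun v hv => ?_⟩
    have hvN := (M.Rf_norm _ _ _ hv).2
    refine Or.inl ⟨hvN, fun hc => ?_⟩
    rcases hc with ⟨_, hχ, hnχ⟩ | ⟨h, _⟩
    · rcases hnχ with ⟨_, hn⟩ | ⟨h, _⟩
      · exact hn hχ
      · exact h hvN
    · exact h hvN
end

section
/- For every constant specification CS for LPC⁺, the regularity rule JRE_≡ is not validity preserving in LPC⁺_CS: there exist formulas φ, ψ and a term t such that ⊨_{LPC⁺_CS} φ ≡ ψ but not ⊨_{LPC⁺_CS} [t]φ ≡ [t]ψ. In particular, for any atomic proposition p and justification variable x, ⊨_{LPC⁺_CS} p ≡ (p∧p) but not ⊨_{LPC⁺_CS} [x]p ≡ [x](p∧p). -/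
namespace Stmt3Aux
open LPCplus

/-- The "bad" formula p ∧ p. -/
def bad (p : ℕ) : Fm := (Fm.atom p).and (Fm.atom p)

/-- Truth at the normal state of the countermodel. -/
def tr (p x : ℕ) : Fm → Prop
  | .atom _ => True
  | .neg φ => ¬ tr p x φ
  | .and φ ψ => tr p x φ ∧ tr p x ψ
  | .imp φ ψ => tr p x φ → tr p x ψ
  | .cond φ ψ => tr p x φ → tr p x ψ
  | .box t φ => tr p x φ ∧ (t = Tm.var x → φ ≠ bad p)

/-- The countermodel. -/
def M (p x : ℕ) : Model where
  W := Bool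
  N := {w | w = true}
  Rf φ w v := w = true ∧ v = true ∧ tr p x φ
  Rf_norm := fun _ _ _ h => ⟨h.1, h.2.1⟩
  Rt t w v := v = w ∨ (w = true ∧ v = false ∧ t = Tm.var x)
  Vn _ := Set.univ
  Vf _ := {φ | φ ≠ bad p}

lemma satFalse (p x : ℕ) (φ : Fm) : Sat (M p x) φ false ↔ φ ≠ bad p := by
  have hF : ¬ @Membership.mem (M p x).W _ _ (M p x).N false := Bool.false_ne_true
  have hVf : ∀ (w : Bool) φ, φ ∈ (M p x).Vf w ↔ φ ≠ bad p := fun _ _ => Iff.rfl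
  cases φ <;> simp [Sat, hF, hVf, bad]

lemma satTrue (p x : ℕ) (φ : Fm) : Sat (M p x) φ true ↔ tr p x φ := by
  have hmem : ∀ w : Bool, @Membership.mem (M p x).W _ _ (M p x).N w ↔ w = true := fun _ => Iff.rfl
  have hVn : ∀ (w : Bool) (a : ℕ), a ∈ (M p x).Vn w := fun _ _ => trivial
  have hRf : ∀ ψ (w v : Bool), (M p x).Rf ψ w v ↔ (w = true ∧ v = true ∧ tr p x ψ) :=
    fun _ _ _ => Iff.rfl
  have hRt : ∀ t (w v : Bool),
      (M p x).Rt t w v ↔ (v = w ∨ (w = true ∧ v = false ∧ t = Tm.var x)) :=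
    fun _ _ _ => Iff.rfl
  induction φ with
  | atom a => simp [Sat, tr, hmem, hVn]
  | neg φ ih => simp [Sat, tr, hmem, ih]
  | and φ ψ ih1 ih2 => simp [Sat, tr, hmem, ih1, ih2]
  | imp φ ψ ih1 ih2 => simp [Sat, tr, hmem, ih1, ih2]
  | cond φ ψ ih1 ih2 =>
    simp only [Sat, tr, hmem, true_and, not_true, false_and, or_false]
    change (∀ v : Bool, (M p x).Rf φ true v → Sat (M p x) ψ v) ↔ _
    simp [hRf, ih2]
  | box t φ ih =>
    simp only [Sat, tr, hmem, true_and, not_true, false_and, or_false]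
    change (∀ v : Bool, (M p x).Rt t true v → Sat (M p x) φ v) ↔ _
    simp [hRt, ih, satFalse, and_comm]

lemma axTr (p x : ℕ) {φ : Fm} (h : Ax φ) : tr p x φ := by
  classical
  induction h with
  | taut φ hφ =>
      have := hφ (fun ψ => decide (tr p x ψ))
        (fun ψ => by by_cases h1 : tr p x ψ <;> simp [tr, h1])
        (fun ψ χ => by by_cases h1 : tr p x ψ <;> by_cases h2 : tr p x χ <;> simp [tr, h1, h2])
        (fun ψ χ => by by_cases h1 : tr p x ψ <;> by_cases h2 : tr p x χ <;>
          simp [tr, h1, h2])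
      exact of_decide_eq_true this
  | a2 φ ψ χ => intro h1 h2 h3; exact h1 h3 (h2 h3)
  | a3 φ => exact fun h => h
  | a4 φ ψ => exact fun h => h
  | a5 s t φ ψ =>
      rintro ⟨⟨h1, -⟩, ⟨h2, -⟩⟩
      exact ⟨h1 h2, by simp⟩
  | a6 s t φ => rintro ⟨h1, -⟩; exact ⟨h1, by simp⟩
  | a7 s t φ => rintro ⟨h1, -⟩; exact ⟨h1, by simp⟩
  | a8 t φ => rintro ⟨h1, -⟩; exact h1
  | a9 t φ => rintro ⟨h1, h2⟩; exact ⟨⟨h1, h2⟩, by simp⟩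

lemma isModelM (CS : Set Fm) (hCS : IsCS CS) (p x : ℕ) : IsModel CS (M p x) := by
  refine ⟨?_, ?_, ?_, ?_, ?_, ?_, ?_⟩
  · rintro φ w v - ⟨-, rfl, hφ⟩
    exact (satTrue p x φ).mpr hφ
  · intro φ w hw hφ
    have hw' : w = true := hw
    subst hw'
    exact ⟨rfl, rfl, (satTrue p x φ).mp hφ⟩
  · intro c φ hmem w v hw hR
    obtain ⟨c', φ', heq, hax⟩ := hCS _ hmem
    injection heq with h1 h2
    subst h2
    have hw' : w = true := hw
    subst hw'
    rcases hR with rfl | ⟨-, -, ht⟩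
    · exact (satTrue p x φ).mpr (axTr p x hax)
    · exact absurd ht (by simp)
  · intro s t w v hw hR
    have hw' : w = true := hw; subst hw'
    rcases hR with rfl | ⟨-, -, ht⟩
    · exact ⟨Or.inl rfl, Or.inl rfl⟩
    · exact absurd ht (by simp)
  · intro s t w v hw hR φ ψ hsat
    have hw' : w = true := hw; subst hw'
    rcases hR with rfl | ⟨-, -, ht⟩
    · have := (satTrue p x _).mp hsat
      obtain ⟨⟨h1, -⟩, ⟨h2, -⟩⟩ := this
      exact (satTrue p x ψ).mpr (h1 h2)
    · exact absurd ht (by simp)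
  · intro t w hw; exact Or.inl rfl
  · intro t w v u hw hR1 hR2
    have hw' : w = true := hw; subst hw'
    rcases hR1 with rfl | ⟨-, -, ht⟩
    · exact hR2
    · exact absurd ht (by simp)

end Stmt3Aux

open LPCplus Stmt3Aux in
lemma stmt_3_aux (CS : Set Fm) (hCS : IsCS CS) (p x : ℕ) :
    Valid CS (eqv (Fm.atom p) ((Fm.atom p).and (Fm.atom p))) ∧
    ¬ Valid CS (eqv (Fm.box (Tm.var x) (Fm.atom p))
        (Fm.box (Tm.var x) ((Fm.atom p).and (Fm.atom p)))) := by
  constructor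
  · intro M hM w hw
    refine Or.inl ⟨hw, Or.inl ⟨hw, fun h => Or.inl ⟨hw, h, h⟩⟩,
      Or.inl ⟨hw, fun h => ?_⟩⟩
    rcases h with ⟨-, h1, -⟩ | ⟨hn, -⟩
    · exact h1
    · exact absurd hw hn
  · intro hval
    have := hval (M p x) (isModelM CS hCS p x) true rfl
    rcases this with ⟨-, h1, -⟩ | ⟨hn, -⟩
    · rcases h1 with ⟨-, h1⟩ | ⟨hn, -⟩
      · have hb : Sat (M p x) (Fm.box (Tm.var x) (Fm.atom p)) true :=
          (satTrue p x _).mpr ⟨trivial, fun _ => by simp [bad]⟩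
        have := (satTrue p x _).mp (h1 hb)
        exact this.2 rfl rfl
      · exact hn rfl
    · exact hn rfl

open LPCplus in
/-- The regularity rule JRE_≡ is not validity preserving in LPC⁺_CS;
in particular this fails for φ = p, ψ = p∧p and t = x. -/
theorem stmt_3 (CS : Set Fm) (hCS : IsCS CS) :
    (∃ (φ ψ : Fm) (t : Tm),
        Valid CS (eqv φ ψ) ∧ ¬ Valid CS (eqv (Fm.box t φ) (Fm.box t ψ))) ∧
    (∀ (p x : ℕ),
        Valid CS (eqv (Fm.atom p) ((Fm.atom p).and (Fm.atom p))) ∧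
        ¬ Valid CS (eqv (Fm.box (Tm.var x) (Fm.atom p))
            (Fm.box (Tm.var x) ((Fm.atom p).and (Fm.atom p))))) := by
  exact ⟨⟨Fm.atom 0, (Fm.atom 0).and (Fm.atom 0), Tm.var 0,
    (stmt_3_aux CS hCS 0 0).1, (stmt_3_aux CS hCS 0 0).2⟩,
    fun p x => stmt_3_aux CS hCS p x⟩
end

section
/- For every constant specification CS for LPC⁺, the regularity rule JRE_⇔ is not validity preserving in LPC⁺_CS: there exist formulas φ, ψ and a term t such that ⊨_{LPC⁺_CS} φ ⇔ ψ but not ⊨_{LPC⁺_CS} [t]φ ⇔ [t]ψ. In particular, for any atomic proposition p and justification variable x, ⊨_{LPC⁺_CS} ((p∧p)>p) ⇔ (p∨¬p) but not ⊨_{LPC⁺_CS} [x]((p∧p)>p) ⇔ [x](p∨¬p). -/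
namespace LPCplus

/-- The formula (p∧p)>p. -/
def phi0 (p : ℕ) : Fm := ((Fm.atom p).and (Fm.atom p)).cond (Fm.atom p)

def gfun (p : ℕ) (χ : Fm) : Bool := decide (χ = phi0 p)

def ff (p x : ℕ) : Fm → Bool
  | .atom _ => false
  | .neg χ => !ff p x χ
  | .and χ ρ => ff p x χ && ff p x ρ
  | .imp χ ρ => !ff p x χ || ff p x ρ
  | .cond χ ρ => !ff p x χ || ff p x ρ
  | .box t χ => ff p x χ && (!(decide (t = Tm.var x)) || gfun p χ)

def cModel (p x : ℕ) : Model where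
  W := Bool
  N := {b | b = true}
  Rf χ a b := a = true ∧ b = true ∧ ff p x χ = true
  Rf_norm := fun _ _ _ h => ⟨h.1, h.2.1⟩
  Rt t _ b := b = true ∨ t = Tm.var x
  Vn _ := ∅
  Vf _ := {χ | gfun p χ = true}

lemma sat_false (p x : ℕ) (χ : Fm) :
    Sat (cModel p x) χ false ↔ gfun p χ = true := by
  cases χ <;> exact ⟨fun h => h.elim (fun h' => (Bool.false_ne_true h'.1).elim) (fun h' => h'.2),
    fun h => Or.inr ⟨Bool.false_ne_true, h⟩⟩

lemma memN (p x : ℕ) (b : Bool) : b ∈ (cModel p x).N ↔ b = true := Iff.rfl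
lemma memVn (p x q : ℕ) (b : Bool) : q ∈ (cModel p x).Vn b ↔ False := Iff.rfl
lemma memVf (p x : ℕ) (χ : Fm) (b : Bool) :
    χ ∈ (cModel p x).Vf b ↔ gfun p χ = true := Iff.rfl

lemma sat_true (p x : ℕ) (χ : Fm) :
    Sat (cModel p x) χ true ↔ ff p x χ = true := by
  induction χ with
  | atom q =>
      simp [Sat, show ((true:Bool) ∈ (cModel p x).N) from rfl, memVn, ff]
      exact fun h => absurd rfl h
  | neg χ ih =>
      simp [Sat, show ((true:Bool) ∈ (cModel p x).N) from rfl, ff, ih]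
      exact ⟨fun h => h.elim (·.2) (fun h => absurd rfl h.1), fun h => Or.inl ⟨rfl, h⟩⟩
  | and χ ρ ih1 ih2 =>
      simp [Sat, show ((true:Bool) ∈ (cModel p x).N) from rfl, ff, ih1, ih2]
      exact ⟨fun h => h.elim (·.2) (fun h => absurd rfl h.1), fun h => Or.inl ⟨rfl, h⟩⟩
  | imp χ ρ ih1 ih2 =>
      simp only [Sat, ff, ih1, ih2]
      cases hχ : ff p x χ <;> cases hρ : ff p x ρ <;>
        simp [show ((true:Bool) ∈ (cModel p x).N) from rfl, hχ, hρ]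
      · exact Or.inl rfl
      · exact Or.inl rfl
      · exact fun h => absurd rfl h
      · exact Or.inl rfl
  | cond χ ρ ih1 ih2 =>
      have hN : (true : Bool) ∈ (cModel p x).N := rfl
      simp only [Sat, ff]
      constructor
      · rintro (⟨-, h⟩ | ⟨hn, -⟩)
        · cases hχ : ff p x χ
          · simp
          · have := ih2.mp (h true ⟨rfl, rfl, hχ⟩)
            simp [this]
        · exact absurd hN hn
      · intro h
        refine Or.inl ⟨hN, ?_⟩
        rintro v ⟨-, rfl, hχ⟩
        refine ih2.mpr ?_
        simpa [hχ] using h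
  | box t χ ih =>
      have hN : (true : Bool) ∈ (cModel p x).N := rfl
      simp only [Sat, ff]
      constructor
      · rintro (⟨-, h⟩ | ⟨hn, -⟩)
        · have h1 : ff p x χ = true := ih.mp (h true (Or.inl rfl))
          by_cases ht : t = Tm.var x
          · have h2 := (sat_false p x χ).mp (h false (Or.inr ht))
            simp [h1, ht, h2]
          · simp [h1, ht]
        · exact absurd hN hn
      · intro h
        have h' : ff p x χ = true ∧ (t = Tm.var x → gfun p χ = true) := by
          revert h
          by_cases ht : t = Tm.var x <;> simp [ht]
        refine Or.inl ⟨hN, ?_⟩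
        rintro (_|_) hv
        · rcases hv with hv | ht
          · exact absurd hv (by simp)
          · exact (sat_false p x χ).mpr (h'.2 ht)
        · exact ih.mpr h'.1

lemma ax_ff (p x : ℕ) {φ : Fm} (h : Ax φ) : ff p x φ = true := by
  induction h with
  | taut φ ht =>
      exact ht (ff p x) (fun ψ => rfl) (fun ψ χ => rfl) (fun ψ χ => rfl)
  | a2 φ ψ χ => simp [ff]; cases ff p x φ <;> cases ff p x ψ <;> cases ff p x χ <;> simp
  | a3 φ => simp [ff]
  | a4 φ ψ => simp [ff]; cases ff p x φ <;> cases ff p x ψ <;> simp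
  | a5 s t φ ψ => simp [ff]; cases ff p x φ <;> cases ff p x ψ <;> simp
  | a6 s t φ => simp [ff]; cases ff p x φ <;> simp
  | a7 s t φ => simp [ff]; cases ff p x φ <;> simp
  | a8 t φ => simp [ff]; cases ff p x φ <;> simp
  | a9 t φ =>
      simp only [ff]
      cases ff p x φ <;> cases gfun p φ <;>
        cases hd : decide (t = Tm.var x) <;> simp [hd]

lemma isModel_cModel (CS : Set Fm) (hCS : IsCS CS) (p x : ℕ) :
    IsModel CS (cModel p x) := by
  refine ⟨?_, ?_, ?_, ?_, ?_, ?_, ?_⟩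
  · rintro φ w v - ⟨-, rfl, hφ⟩
    exact (sat_true p x φ).mpr hφ
  · rintro φ w hw hs
    rcases hw with rfl
    exact ⟨rfl, rfl, (sat_true p x φ).mp hs⟩
  · rintro c φ hc w v hw hR
    rcases hCS _ hc with ⟨c', φ', heq, hax⟩
    injection heq with h1 h2
    subst h2
    rcases hR with rfl | ht
    · exact (sat_true p x _).mpr (ax_ff p x hax)
    · exact absurd ht (by simp)
  · rintro s t w v hw (rfl | ht)
    · exact ⟨Or.inl rfl, Or.inl rfl⟩
    · exact absurd ht (by simp)
  · rintro s t w v hw (rfl | ht) φ ψ hs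
    · have hw' : w = true := hw
      subst hw'
      rw [sat_true] at hs ⊢
      revert hs
      simp only [ff]
      cases ff p x φ <;> cases ff p x ψ <;> simp
    · exact absurd ht (by simp)
  · rintro t w hw
    rcases hw with rfl
    exact Or.inl rfl
  · rintro t w v u hw h1 h2
    rcases h2 with rfl | ht
    · exact Or.inl rfl
    · exact Or.inr ht

lemma valid_eqv_gen (CS : Set Fm) (p : ℕ) :
    Valid CS (condEqv (phi0 p) (orF (Fm.atom p) (Fm.neg (Fm.atom p)))) := by
  rintro M ⟨hC1, hC2, -⟩ w hw
  refine Or.inl ⟨hw, Or.inl ⟨hw, ?_⟩, Or.inl ⟨hw, ?_⟩⟩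
  · -- φ₀ > ψ₀
    intro v hv
    have hvN : v ∈ M.N := (M.Rf_norm _ _ _ hv).2
    -- ψ₀ = ¬(¬p ∧ ¬¬p) true at normal v
    refine Or.inl ⟨hvN, ?_⟩
    rintro (⟨-, h1, h2⟩ | ⟨hn, -⟩)
    · rcases h1 with ⟨-, h1⟩ | ⟨hn, -⟩
      · rcases h2 with ⟨-, h2⟩ | ⟨hn, -⟩
        · exact h2 (Or.inl ⟨hvN, h1⟩)
        · exact hn hvN
      · exact hn hvN
    · exact hn hvN
  · -- ψ₀ > φ₀
    intro v hv
    have hvN : v ∈ M.N := (M.Rf_norm _ _ _ hv).2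
    refine Or.inl ⟨hvN, ?_⟩
    intro u hu
    have huN : u ∈ M.N := (M.Rf_norm _ _ _ hu).2
    have := hC1 _ _ _ hvN hu
    rcases this with ⟨-, h1, -⟩ | ⟨hn, -⟩
    · exact h1
    · exact absurd huN hn

lemma not_valid_box (CS : Set Fm) (hCS : IsCS CS) (p x : ℕ) :
    ¬ Valid CS (condEqv
        (Fm.box (Tm.var x) (phi0 p))
        (Fm.box (Tm.var x) (orF (Fm.atom p) (Fm.neg (Fm.atom p))))) := by
  intro hV
  have h := hV (cModel p x) (isModel_cModel CS hCS p x) true rfl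
  rcases h with ⟨-, h1, -⟩ | ⟨hn, -⟩
  · rcases h1 with ⟨-, h1⟩ | ⟨hn, -⟩
    · have hbφ : ff p x (Fm.box (Tm.var x) (phi0 p)) = true := by
        simp [ff, gfun, phi0]
      have := h1 true ⟨rfl, rfl, hbφ⟩
      rw [sat_true] at this
      simp [ff, gfun, phi0, orF] at this
    · exact hn rfl
  · exact hn rfl

end LPCplus

open LPCplus in
/-- The regularity rule JRE_⇔ is not validity preserving in LPC⁺_CS;
in particular this fails for φ = (p∧p)>p, ψ = p∨¬p and t = x. -/
theorem stmt_4 (CS : Set Fm) (hCS : IsCS CS) :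
    (∃ (φ ψ : Fm) (t : Tm),
        Valid CS (condEqv φ ψ) ∧ ¬ Valid CS (condEqv (Fm.box t φ) (Fm.box t ψ))) ∧
    (∀ (p x : ℕ),
        Valid CS (condEqv (((Fm.atom p).and (Fm.atom p)).cond (Fm.atom p))
            (orF (Fm.atom p) (Fm.neg (Fm.atom p)))) ∧
        ¬ Valid CS (condEqv
            (Fm.box (Tm.var x) (((Fm.atom p).and (Fm.atom p)).cond (Fm.atom p)))
            (Fm.box (Tm.var x) (orF (Fm.atom p) (Fm.neg (Fm.atom p)))))) := by
  constructor
  · exact ⟨phi0 0, orF (Fm.atom 0) (Fm.neg (Fm.atom 0)), Tm.var 0,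
      valid_eqv_gen CS 0, not_valid_box CS hCS 0 0⟩
  · intro p x
    exact ⟨valid_eqv_gen CS p, not_valid_box CS hCS p x⟩
end

section
/- Truth Lemma: in the canonical relational model M for LPC⁺_CS, for every formula φ and every state Γ of M (normal or not), M,Γ ⊨ φ if and only if φ ∈ Γ. -/
namespace LPCplus

/- ### Auxiliary lemmas -/

lemma prvT {CS : Set Fm} {φ : Fm} (h : IsTaut φ) : Prv CS φ := Prv.ax (Ax.taut φ h)

lemma prv_K {CS : Set Fm} (A B : Fm) : Prv CS (A.imp (B.imp A)) := by
  apply prvT; intro v hn ha hi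
  simp only [hi]; cases v A <;> cases v B <;> rfl

lemma prv_id {CS : Set Fm} (A : Fm) : Prv CS (A.imp A) := by
  apply prvT; intro v hn ha hi
  simp only [hi]; cases v A <;> rfl

lemma prv_andl {CS : Set Fm} (A B : Fm) : Prv CS ((A.and B).imp A) := by
  apply prvT; intro v hn ha hi
  simp only [hi, ha]; cases v A <;> cases v B <;> rfl

lemma prv_andr {CS : Set Fm} (A B : Fm) : Prv CS ((A.and B).imp B) := by
  apply prvT; intro v hn ha hi
  simp only [hi, ha]; cases v A <;> cases v B <;> rfl

lemma prv_pair {CS : Set Fm} (A B : Fm) : Prv CS (A.imp (B.imp (A.and B))) := by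
  apply prvT; intro v hn ha hi
  simp only [hi, ha]; cases v A <;> cases v B <;> rfl

lemma prv_top {CS : Set Fm} : Prv CS topF := by
  apply prvT; intro v hn ha hi
  simp only [topF, botF, hn, ha]; cases v (Fm.atom 0) <;> rfl

lemma prv_imp_trans {CS : Set Fm} {A B C : Fm}
    (h1 : Prv CS (A.imp B)) (h2 : Prv CS (B.imp C)) : Prv CS (A.imp C) := by
  have t : Prv CS ((A.imp B).imp ((B.imp C).imp (A.imp C))) := by
    apply prvT; intro v hn ha hi
    simp only [hi]; cases v A <;> cases v B <;> cases v C <;> rfl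
  exact (t.mp h1).mp h2

lemma prv_imp_pair {CS : Set Fm} {A B C : Fm}
    (h1 : Prv CS (A.imp B)) (h2 : Prv CS (A.imp C)) : Prv CS (A.imp (B.and C)) := by
  have t : Prv CS ((A.imp B).imp ((A.imp C).imp (A.imp (B.and C)))) := by
    apply prvT; intro v hn ha hi
    simp only [hi, ha]; cases v A <;> cases v B <;> cases v C <;> rfl
  exact (t.mp h1).mp h2

lemma prv_frege {CS : Set Fm} {A B C : Fm}
    (h1 : Prv CS (A.imp (B.imp C))) (h2 : Prv CS (A.imp B)) : Prv CS (A.imp C) := by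
  have t : Prv CS ((A.imp (B.imp C)).imp ((A.imp B).imp (A.imp C))) := by
    apply prvT; intro v hn ha hi
    simp only [hi]; cases v A <;> cases v B <;> cases v C <;> rfl
  exact (t.mp h1).mp h2

lemma prv_curry {CS : Set Fm} {A B C : Fm}
    (h : Prv CS ((A.and B).imp C)) : Prv CS (A.imp (B.imp C)) := by
  have t : Prv CS (((A.and B).imp C).imp (A.imp (B.imp C))) := by
    apply prvT; intro v hn ha hi
    simp only [hi, ha]; cases v A <;> cases v B <;> cases v C <;> rfl
  exact t.mp h

/-- Intro rule for foldl-conjunctions. -/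
lemma prv_foldl_intro {CS : Set Fm} {A : Fm} :
    ∀ (l : List Fm) (a : Fm), Prv CS (A.imp a) → (∀ χ ∈ l, Prv CS (A.imp χ)) →
      Prv CS (A.imp (l.foldl Fm.and a))
  | [], a, h, _ => h
  | x :: t, a, h, h2 => by
    simp only [List.foldl_cons]
    exact prv_foldl_intro t (a.and x) (prv_imp_pair h (h2 x (by simp)))
      (fun χ hχ => h2 χ (by simp [hχ]))

lemma prv_conj_intro {CS : Set Fm} {A : Fm} {l : List Fm}
    (h : ∀ χ ∈ l, Prv CS (A.imp χ)) : Prv CS (A.imp (listConj l)) := by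
  cases l with
  | nil => exact (prv_K topF A).mp prv_top
  | cons x t =>
    exact prv_foldl_intro t x (h x (by simp)) (fun χ hχ => h χ (by simp [hχ]))

/-- Elim rule for foldl-conjunctions. -/
lemma prv_foldl_elim {CS : Set Fm} {χ : Fm} :
    ∀ (l : List Fm) (a : Fm), (χ = a ∨ χ ∈ l) → Prv CS ((l.foldl Fm.and a).imp χ)
  | [], a, h => by
    rcases h with h | h
    · subst h; exact prv_id _
    · simp at h
  | x :: t, a, h => by
    simp only [List.foldl_cons]
    rcases h with h | h
    · subst h
      exact prv_imp_trans (prv_foldl_elim t (χ.and x) (Or.inl rfl)) (prv_andl χ x)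
    · simp only [List.mem_cons] at h
      rcases h with h | h
      · subst h
        exact prv_imp_trans (prv_foldl_elim t (a.and χ) (Or.inl rfl)) (prv_andr a χ)
      · exact prv_foldl_elim t (a.and x) (Or.inr h)

lemma prv_conj_elim {CS : Set Fm} {χ : Fm} {l : List Fm} (h : χ ∈ l) :
    Prv CS ((listConj l).imp χ) := by
  cases l with
  | nil => simp at h
  | cons x t =>
    simp only [List.mem_cons] at h
    exact prv_foldl_elim t x (by tauto)

/- ### Deriv lemmas -/

lemma deriv_of_prv {CS T : Set Fm} {φ : Fm} (h : Prv CS φ) : Deriv CS T φ :=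
  ⟨[], by simp, (prv_K φ (listConj [])).mp h⟩

lemma deriv_mem {CS : Set Fm} {T : Set Fm} {φ : Fm} (h : φ ∈ T) : Deriv CS T φ :=
  ⟨[φ], by simpa, prv_conj_elim (by simp)⟩

lemma deriv_mono {CS : Set Fm} {T T' : Set Fm} {φ : Fm} (hs : T ⊆ T')
    (h : Deriv CS T φ) : Deriv CS T' φ := by
  obtain ⟨l, hl, hp⟩ := h
  exact ⟨l, fun ψ hψ => hs (hl ψ hψ), hp⟩

lemma deriv_mp {CS T : Set Fm} {φ ψ : Fm}
    (h1 : Deriv CS T (φ.imp ψ)) (h2 : Deriv CS T φ) : Deriv CS T ψ := by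
  obtain ⟨l1, hl1, hp1⟩ := h1
  obtain ⟨l2, hl2, hp2⟩ := h2
  refine ⟨l1 ++ l2, ?_, ?_⟩
  · intro χ hχ; rcases List.mem_append.mp hχ with h | h
    · exact hl1 χ h
    · exact hl2 χ h
  · have c1 : Prv CS ((listConj (l1 ++ l2)).imp (listConj l1)) :=
      prv_conj_intro (fun χ hχ => prv_conj_elim (List.mem_append.mpr (Or.inl hχ)))
    have c2 : Prv CS ((listConj (l1 ++ l2)).imp (listConj l2)) :=
      prv_conj_intro (fun χ hχ => prv_conj_elim (List.mem_append.mpr (Or.inr hχ)))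
    exact prv_frege (prv_imp_trans c1 hp1) (prv_imp_trans c2 hp2)

/-- Deduction theorem at the `Deriv` level. -/
lemma deriv_deduction {CS T : Set Fm} {φ ψ : Fm}
    (h : Deriv CS (T ∪ {φ}) ψ) : Deriv CS T (φ.imp ψ) := by
  classical
  obtain ⟨l, hl, hp⟩ := h
  refine ⟨l.filter (· ≠ φ), ?_, ?_⟩
  · intro χ hχ
    have := List.of_mem_filter hχ
    have hm := List.mem_of_mem_filter hχ
    rcases hl χ hm with h | h
    · exact h
    · simp at this h; exact absurd h this
  · set A := listConj (l.filter (· ≠ φ)) with hA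
    have key : Prv CS ((A.and φ).imp (listConj l)) := by
      apply prv_conj_intro
      intro χ hχ
      by_cases hc : χ = φ
      · subst hc; exact prv_andr A χ
      · exact prv_imp_trans (prv_andl A φ)
          (prv_conj_elim (List.mem_filter.mpr ⟨hχ, by simpa using hc⟩))
    exact prv_curry (prv_imp_trans key hp)

lemma consis_mono {CS T T' : Set Fm} (hs : T ⊆ T') (h : Consis CS T') : Consis CS T :=
  fun hd => h (deriv_mono hs hd)

/- ### MCS lemmas -/

lemma mcs_consis {CS Γ : Set Fm} (h : MCS CS Γ) : Consis CS Γ := h.1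

lemma mcs_deriv {CS Γ : Set Fm} (h : MCS CS Γ) {φ : Fm} (hd : Deriv CS Γ φ) : φ ∈ Γ := by
  by_contra hn
  have hincons : ¬ Consis CS (Γ ∪ {φ}) := by
    intro hc
    have := h.2 (Γ ∪ {φ}) hc (by intro x hx; exact Or.inl hx)
    have : φ ∈ Γ := this ▸ (Or.inr rfl : φ ∈ Γ ∪ {φ})
    exact hn this
  have hded : Deriv CS Γ (φ.imp botF) := by
    apply deriv_deduction
    by_contra hc; exact hincons hc
  exact h.1 (deriv_mp hded hd)

lemma mcs_prv {CS Γ : Set Fm} (h : MCS CS Γ) {φ : Fm} (hp : Prv CS φ) : φ ∈ Γ :=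
  mcs_deriv h (deriv_of_prv hp)

lemma mcs_mp {CS Γ : Set Fm} (h : MCS CS Γ) {φ ψ : Fm}
    (h1 : φ.imp ψ ∈ Γ) (h2 : φ ∈ Γ) : ψ ∈ Γ :=
  mcs_deriv h (deriv_mp (deriv_mem h1) (deriv_mem h2))

lemma mcs_not_both {CS Γ : Set Fm} (h : MCS CS Γ) {φ : Fm}
    (h1 : φ ∈ Γ) (h2 : Fm.neg φ ∈ Γ) : False := by
  have t : Prv CS (φ.imp ((Fm.neg φ).imp botF)) := by
    apply prvT; intro v hn ha hi
    simp only [hi, hn, ha, botF]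
    cases v φ <;> cases v (Fm.atom 0) <;> rfl
  have : botF ∈ Γ := mcs_mp h (mcs_mp h (mcs_prv h t) h1) h2
  exact h.1 (deriv_mp (deriv_of_prv (prv_id botF)) (deriv_mem this))

lemma mcs_neg_iff {CS Γ : Set Fm} (h : MCS CS Γ) {φ : Fm} :
    Fm.neg φ ∈ Γ ↔ φ ∉ Γ := by
  constructor
  · intro h2 h1; exact mcs_not_both h h1 h2
  · intro hn
    have hincons : ¬ Consis CS (Γ ∪ {φ}) := by
      intro hc
      have := h.2 (Γ ∪ {φ}) hc (by intro x hx; exact Or.inl hx)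
      exact hn (this ▸ (Or.inr rfl : φ ∈ Γ ∪ {φ}))
    have hded : Deriv CS Γ (φ.imp botF) := by
      apply deriv_deduction; by_contra hc; exact hincons hc
    have t : Prv CS ((φ.imp botF).imp (Fm.neg φ)) := by
      apply prvT; intro v hn' ha hi
      simp only [hi, hn', ha, botF]
      cases v φ <;> cases v (Fm.atom 0) <;> rfl
    exact mcs_deriv h (deriv_mp (deriv_of_prv t) hded)

lemma mcs_and_iff {CS Γ : Set Fm} (h : MCS CS Γ) {φ ψ : Fm} :
    φ.and ψ ∈ Γ ↔ φ ∈ Γ ∧ ψ ∈ Γ := by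
  constructor
  · intro hc
    exact ⟨mcs_mp h (mcs_prv h (prv_andl φ ψ)) hc, mcs_mp h (mcs_prv h (prv_andr φ ψ)) hc⟩
  · rintro ⟨h1, h2⟩
    exact mcs_mp h (mcs_mp h (mcs_prv h (prv_pair φ ψ)) h1) h2

lemma mcs_imp_iff {CS Γ : Set Fm} (h : MCS CS Γ) {φ ψ : Fm} :
    φ.imp ψ ∈ Γ ↔ (φ ∈ Γ → ψ ∈ Γ) := by
  constructor
  · intro hi hφ; exact mcs_mp h hi hφ
  · intro hi
    by_cases hφ : φ ∈ Γ
    · exact mcs_mp h (mcs_prv h (prv_K ψ φ)) (hi hφ)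
    · have hnφ : Fm.neg φ ∈ Γ := (mcs_neg_iff h).mpr hφ
      have t : Prv CS ((Fm.neg φ).imp (φ.imp ψ)) := by
        apply prvT; intro v hn ha hi'
        simp only [hi', hn]
        cases v φ <;> cases v ψ <;> rfl
      exact mcs_mp h (mcs_prv h t) hnφ

/- ### Lindenbaum -/

lemma lindenbaum {CS T : Set Fm} (h : Consis CS T) :
    ∃ Γ, T ⊆ Γ ∧ MCS CS Γ := by
  have := zorn_subset_nonempty {Δ : Set Fm | Consis CS Δ} ?_ T h
  · obtain ⟨m, hTm, hmS, hmax⟩ := this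
    refine ⟨m, hTm, hmS, ?_⟩
    intro Δ hΔ hsub
    exact le_antisymm (hmax hΔ hsub) hsub
  · intro c hc hchain hcne
    refine ⟨⋃₀ c, ?_, fun s hs => Set.subset_sUnion_of_mem hs⟩
    intro hd
    obtain ⟨l, hl, hp⟩ := hd
    -- find a member of the chain containing all of l
    have : ∃ S ∈ c, ∀ ψ ∈ l, ψ ∈ S := by
      clear hp
      induction l with
      | nil => obtain ⟨S, hS⟩ := hcne; exact ⟨S, hS, by simp⟩
      | cons x t ih =>
        obtain ⟨S, hSc, hSt⟩ := ih (fun ψ hψ => hl ψ (by simp [hψ]))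
        obtain ⟨S', hS'c, hxS'⟩ := hl x (by simp)
        rcases hchain.total hSc hS'c with hss | hss
        · exact ⟨S', hS'c, by
            intro ψ hψ
            rcases List.mem_cons.mp hψ with h | h
            · subst h; exact hxS'
            · exact hss (hSt ψ h)⟩
        · exact ⟨S, hSc, by
            intro ψ hψ
            rcases List.mem_cons.mp hψ with h | h
            · subst h; exact hss hxS'
            · exact hSt ψ h⟩
    obtain ⟨S, hSc, hSl⟩ := this
    exact (hc hSc) ⟨l, hSl, hp⟩

/- ### Conditional lemmas -/

lemma deriv_cond_and {CS Γ : Set Fm} {φ A B : Fm}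
    (h1 : Deriv CS Γ (φ.cond A)) (h2 : Deriv CS Γ (φ.cond B)) :
    Deriv CS Γ (φ.cond (A.and B)) := by
  have hr : Prv CS (φ.cond (A.imp (B.imp (A.and B)))) := Prv.rcn φ (prv_pair A B)
  have ha2 : Prv CS ((φ.cond A).imp (φ.cond (B.imp (A.and B)))) :=
    (Prv.ax (Ax.a2 φ A (B.imp (A.and B)))).mp hr
  have ha2' : Deriv CS Γ ((φ.cond B).imp (φ.cond (A.and B))) := by
    have := deriv_mp (deriv_of_prv ha2) h1
    exact deriv_mp (deriv_of_prv ((Prv.ax (Ax.a2 φ B (A.and B))))) this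
  exact deriv_mp ha2' h2

lemma deriv_cond_foldl {CS Γ : Set Fm} {φ : Fm} :
    ∀ (l : List Fm) (a : Fm), Deriv CS Γ (φ.cond a) → (∀ χ ∈ l, Deriv CS Γ (φ.cond χ)) →
      Deriv CS Γ (φ.cond (l.foldl Fm.and a))
  | [], a, h, _ => h
  | x :: t, a, h, h2 => by
    simp only [List.foldl_cons]
    exact deriv_cond_foldl t (a.and x) (deriv_cond_and h (h2 x (by simp)))
      (fun χ hχ => h2 χ (by simp [hχ]))

lemma deriv_cond_conj {CS Γ : Set Fm} {φ : Fm} {l : List Fm}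
    (h : ∀ χ ∈ l, Deriv CS Γ (φ.cond χ)) : Deriv CS Γ (φ.cond (listConj l)) := by
  cases l with
  | nil => exact deriv_of_prv (Prv.rcn φ prv_top)
  | cons x t => exact deriv_cond_foldl t x (h x (by simp)) (fun χ hχ => h χ (by simp [hχ]))

/-- Existence lemma for the conditional. -/
lemma cond_existence {CS Γ : Set Fm} (hΓ : MCS CS Γ) {φ ψ : Fm}
    (hn : Fm.cond φ ψ ∉ Γ) :
    ∃ Δ, MCS CS Δ ∧ {χ | Fm.cond φ χ ∈ Γ} ⊆ Δ ∧ ψ ∉ Δ := by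
  set S : Set Fm := {χ | Fm.cond φ χ ∈ Γ} with hS
  have hcons : Consis CS (S ∪ {Fm.neg ψ}) := by
    intro hd
    have hded : Deriv CS S ((Fm.neg ψ).imp botF) := deriv_deduction hd
    obtain ⟨l, hl, hp⟩ := hded
    have t : Prv CS (((Fm.neg ψ).imp botF).imp ψ) := by
      apply prvT; intro v hn' ha hi
      simp only [hi, hn', ha, botF]
      cases v ψ <;> cases v (Fm.atom 0) <;> rfl
    have hcψ : Prv CS ((listConj l).imp ψ) := prv_imp_trans hp t
    have hr : Prv CS (φ.cond ((listConj l).imp ψ)) := Prv.rcn φ hcψ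
    have ha2 : Prv CS ((φ.cond (listConj l)).imp (φ.cond ψ)) :=
      (Prv.ax (Ax.a2 φ (listConj l) ψ)).mp hr
    have hconj : Deriv CS Γ (φ.cond (listConj l)) :=
      deriv_cond_conj (fun χ hχ => deriv_mem (hl χ hχ))
    have : Fm.cond φ ψ ∈ Γ :=
      mcs_deriv hΓ (deriv_mp (deriv_of_prv ha2) hconj)
    exact hn this
  obtain ⟨Δ, hsub, hΔ⟩ := lindenbaum hcons
  refine ⟨Δ, hΔ, fun χ hχ => hsub (Or.inl hχ), ?_⟩
  intro hψ
  exact mcs_not_both hΔ hψ (hsub (Or.inr rfl))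

/- ### Canonical model unfolding -/

lemma canon_N {CS : Set Fm} {Γ : Set Fm} :
    Γ ∈ (canonical CS).N ↔ MCS CS Γ := Iff.rfl

lemma canon_Vf {CS : Set Fm} {Γ : Set Fm} {φ : Fm} :
    φ ∈ (canonical CS).Vf Γ ↔ φ ∈ Γ := Iff.rfl

lemma canon_Vn {CS : Set Fm} {Γ : Set Fm} {p : ℕ} :
    p ∈ (canonical CS).Vn Γ ↔ Fm.atom p ∈ Γ := Iff.rfl

lemma canon_Rf {CS : Set Fm} {Γ Δ : Set Fm} {φ : Fm} :
    (canonical CS).Rf φ Γ Δ ↔ MCS CS Γ ∧ MCS CS Δ ∧ {ψ | Fm.cond φ ψ ∈ Γ} ⊆ Δ := Iff.rfl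

lemma canon_Rt {CS : Set Fm} {Γ Δ : Set Fm} {t : Tm} :
    (canonical CS).Rt t Γ Δ ↔ {ψ | Fm.box t ψ ∈ Γ} ⊆ Δ := Iff.rfl

/- ### Truth lemma -/

lemma truth_lemma (CS : Set Fm) : ∀ (φ : Fm) (Γ : Set Fm),
    Sat (canonical CS) φ Γ ↔ φ ∈ Γ := by
  intro φ
  induction φ with
  | atom p =>
    intro Γ
    by_cases hΓ : MCS CS Γ
    · have hN : @Membership.mem (canonical CS).W (Set (canonical CS).W) _ (canonical CS).N Γ := hΓ
      simp only [Sat, hN, not_true_eq_false, false_and, or_false, true_and]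
      exact canon_Vn
    · have hN : ¬ @Membership.mem (canonical CS).W (Set (canonical CS).W) _ (canonical CS).N Γ := hΓ
      simp only [Sat, hN, not_false_eq_true, false_and, false_or, true_and]
      exact canon_Vf
  | neg φ ih =>
    intro Γ
    by_cases hΓ : MCS CS Γ
    · have hN : @Membership.mem (canonical CS).W (Set (canonical CS).W) _ (canonical CS).N Γ := hΓ
      simp only [Sat, hN, not_true_eq_false, false_and, or_false, true_and]
      rw [ih Γ]
      exact (mcs_neg_iff hΓ).symm
    · have hN : ¬ @Membership.mem (canonical CS).W (Set (canonical CS).W) _ (canonical CS).N Γ := hΓ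
      simp only [Sat, hN, not_false_eq_true, false_and, false_or, true_and]
      exact canon_Vf
  | and φ ψ ihφ ihψ =>
    intro Γ
    by_cases hΓ : MCS CS Γ
    · have hN : @Membership.mem (canonical CS).W (Set (canonical CS).W) _ (canonical CS).N Γ := hΓ
      simp only [Sat, hN, not_true_eq_false, false_and, or_false, true_and]
      rw [ihφ Γ, ihψ Γ]
      exact (mcs_and_iff hΓ).symm
    · have hN : ¬ @Membership.mem (canonical CS).W (Set (canonical CS).W) _ (canonical CS).N Γ := hΓ
      simp only [Sat, hN, not_false_eq_true, false_and, false_or, true_and]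
      exact canon_Vf
  | imp φ ψ ihφ ihψ =>
    intro Γ
    by_cases hΓ : MCS CS Γ
    · have hN : @Membership.mem (canonical CS).W (Set (canonical CS).W) _ (canonical CS).N Γ := hΓ
      simp only [Sat, hN, not_true_eq_false, false_and, or_false, true_and]
      rw [mcs_imp_iff hΓ]
      constructor
      · intro h hφ; exact (ihψ Γ).mp (h ((ihφ Γ).mpr hφ))
      · intro h hφ; exact (ihψ Γ).mpr (h ((ihφ Γ).mp hφ))
    · have hN : ¬ @Membership.mem (canonical CS).W (Set (canonical CS).W) _ (canonical CS).N Γ := hΓ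
      simp only [Sat, hN, not_false_eq_true, false_and, false_or, true_and]
      exact canon_Vf
  | cond φ ψ ihφ ihψ =>
    intro Γ
    by_cases hΓ : MCS CS Γ
    · have hN : @Membership.mem (canonical CS).W (Set (canonical CS).W) _ (canonical CS).N Γ := hΓ
      simp only [Sat, hN, not_true_eq_false, false_and, or_false, true_and]
      constructor
      · intro h
        by_contra hn
        obtain ⟨Δ, hΔ, hsub, hψΔ⟩ := cond_existence hΓ hn
        exact hψΔ ((ihψ Δ).mp (h Δ (canon_Rf.mpr ⟨hΓ, hΔ, hsub⟩)))
      · intro h Δ hR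
        exact (ihψ Δ).mpr ((canon_Rf.mp hR).2.2 h)
    · have hN : ¬ @Membership.mem (canonical CS).W (Set (canonical CS).W) _ (canonical CS).N Γ := hΓ
      simp only [Sat, hN, not_false_eq_true, false_and, false_or, true_and]
      exact canon_Vf
  | box t φ ih =>
    intro Γ
    by_cases hΓ : MCS CS Γ
    · have hN : @Membership.mem (canonical CS).W (Set (canonical CS).W) _ (canonical CS).N Γ := hΓ
      simp only [Sat, hN, not_true_eq_false, false_and, or_false, true_and]
      constructor
      · intro h
        have := h {ψ | Fm.box t ψ ∈ Γ} (canon_Rt.mpr (fun χ hχ => hχ))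
        exact (ih _).mp this
      · intro h Δ hsub
        exact (ih Δ).mpr ((canon_Rt.mp hsub) h)
    · have hN : ¬ @Membership.mem (canonical CS).W (Set (canonical CS).W) _ (canonical CS).N Γ := hΓ
      simp only [Sat, hN, not_false_eq_true, false_and, false_or, true_and]
      exact canon_Vf

end LPCplus

open LPCplus in
/-- Truth Lemma: in the canonical relational model for LPC⁺_CS,
for every formula φ and every state Γ, M,Γ ⊨ φ iff φ ∈ Γ. -/
theorem stmt_6 (CS : Set Fm) (hCS : IsCS CS) (φ : Fm) (Γ : Set Fm) :
    Sat (canonical CS) φ Γ ↔ φ ∈ Γ := by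
  exact truth_lemma CS φ Γ
end

section
/- For every constant specification CS for LPC⁺, the rule RCEA is not validity preserving in LPC⁺_CS: there exist formulas φ, ψ, χ such that ⊨_{LPC⁺_CS} φ ≡ ψ but not ⊨_{LPC⁺_CS} (φ>χ) ≡ (ψ>χ). In particular, for atomic propositions p, q, ⊨_{LPC⁺_CS} p ≡ (p∧p) but not ⊨_{LPC⁺_CS} (p>q) ≡ ((p∧p)>q). -/
namespace LPCplus

namespace Stmt12

/-- `p ∧ p` -/
def pp (p : ℕ) : Fm := (Fm.atom p).and (Fm.atom p)

/-- Boolean evaluation on the two-world model. -/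
def ev (p : ℕ) : Fm → Bool → Bool
  | .atom n, w => decide (n = p) && w
  | .neg φ, w => !(ev p φ w)
  | .and φ ψ, w => ev p φ w && ev p ψ w
  | .imp φ ψ, w => !(ev p φ w) || ev p ψ w
  | .cond φ ψ, w =>
      (!(ev p φ w) || ev p ψ w) && (!(decide (φ = pp p) && !w) || ev p ψ true)
  | .box _ φ, w => ev p φ w

lemma ev_imp_iff (p : ℕ) (φ ψ : Fm) (w : Bool) :
    ev p (φ.imp ψ) w = true ↔ (ev p φ w = true → ev p ψ w = true) := by
  cases h : ev p φ w <;> simp [ev, h]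

lemma ev_cond_iff (p : ℕ) (φ ψ : Fm) (w : Bool) :
    ev p (φ.cond ψ) w = true ↔
      ((ev p φ w = true → ev p ψ w = true) ∧
       (φ = pp p → w = false → ev p ψ true = true)) := by
  rw [show ev p (φ.cond ψ) w =
      ((!(ev p φ w) || ev p ψ w) && (!(decide (φ = pp p) && !w) || ev p ψ true))
    from rfl, Bool.and_eq_true, Bool.or_eq_true, Bool.or_eq_true,
    Bool.not_eq_true', Bool.not_eq_true']
  constructor
  · rintro ⟨h1, h2⟩
    refine ⟨fun hφ => h1.resolve_left (by simp [hφ]), fun ha hb => ?_⟩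
    subst hb
    exact h2.resolve_left (by simp [ha])
  · rintro ⟨h1, h2⟩
    constructor
    · cases hφ : ev p φ w
      · exact Or.inl rfl
      · exact Or.inr (h1 hφ)
    · by_cases ha : φ = pp p
      · cases w
        · exact Or.inr (h2 ha rfl)
        · exact Or.inl (by simp)
      · exact Or.inl (by simp [ha])

/-- All axioms evaluate to true everywhere. -/
lemma ax_ev (p : ℕ) {φ : Fm} (h : Ax φ) (w : Bool) : ev p φ w = true := by
  cases h with
  | taut φ ht =>
      exact ht (fun ψ => ev p ψ w) (fun _ => rfl) (fun _ _ => rfl) (fun _ _ => rfl)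
  | a2 φ ψ χ =>
      rw [ev_imp_iff, ev_imp_iff]
      intro h1 h2
      rw [ev_cond_iff] at h1 h2 ⊢
      refine ⟨fun hφ => ?_, fun ha hb => ?_⟩
      · exact (ev_imp_iff p ψ χ w).mp (h1.1 hφ) (h2.1 hφ)
      · exact (ev_imp_iff p ψ χ true).mp (h1.2 ha hb) (h2.2 ha hb)
  | a3 φ =>
      rw [ev_cond_iff]
      exact ⟨id, fun h _ => by subst h; simp [ev, pp]⟩
  | a4 φ ψ =>
      rw [ev_imp_iff, ev_imp_iff]
      intro h1
      rw [ev_cond_iff] at h1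
      exact h1.1
  | a5 s t φ ψ =>
      rw [ev_cond_iff]
      constructor
      · intro h
        show ev p ψ w = true
        have h1 : (ev p (φ.cond ψ) w && ev p φ w) = true := h
        simp only [Bool.and_eq_true] at h1
        rw [ev_cond_iff] at h1
        exact h1.1.1 h1.2
      · intro h; exact absurd h (by simp [pp])
  | a6 s t φ =>
      rw [ev_cond_iff]
      exact ⟨fun h => h, fun h => absurd h (by simp [pp])⟩
  | a7 s t φ =>
      rw [ev_cond_iff]
      exact ⟨fun h => h, fun h => absurd h (by simp [pp])⟩
  | a8 t φ =>
      rw [ev_cond_iff]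
      exact ⟨fun h => h, fun h => absurd h (by simp [pp])⟩
  | a9 t φ =>
      rw [ev_cond_iff]
      exact ⟨fun h => h, fun h => absurd h (by simp [pp])⟩

/-- The two-world countermodel. -/
def M (p : ℕ) : Model where
  W := Bool
  N := Set.univ
  Rf φ w v := (v = w ∧ ev p φ w = true) ∨ (φ = pp p ∧ w = false ∧ v = true)
  Rf_norm := fun _ _ _ _ => ⟨trivial, trivial⟩
  Rt _ w v := v = w
  Vn w := {n | (decide (n = p) && w) = true}
  Vf _ := ∅

lemma M_N (p : ℕ) (w : (M p).W) : w ∈ (M p).N := trivial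

lemma mem_Vn (p n : ℕ) (w : (M p).W) :
    n ∈ (M p).Vn w ↔ (decide (n = p) && w) = true := Iff.rfl

lemma not_mem_Vf (p : ℕ) (φ : Fm) (w : (M p).W) : φ ∉ (M p).Vf w := fun h => h

lemma sat_iff (p : ℕ) (φ : Fm) (w : (M p).W) :
    Sat (M p) φ w ↔ ev p φ w = true := by
  induction φ generalizing w with
  | atom n =>
      show ((w ∈ (M p).N ∧ n ∈ (M p).Vn w) ∨ _) ↔ _
      rw [mem_Vn]
      refine ⟨fun h => ?_, fun h => Or.inl ⟨M_N p w, h⟩⟩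
      rcases h with ⟨_, h⟩ | ⟨hn, _⟩
      · exact h
      · exact absurd (M_N p w) hn
  | neg φ ih =>
      show ((w ∈ (M p).N ∧ ¬ Sat (M p) φ w) ∨ _) ↔ _
      rw [show ev p φ.neg w = !(ev p φ w) from rfl]
      constructor
      · rintro (⟨_, h⟩ | ⟨hn, _⟩)
        · simpa [ih] using h
        · exact absurd (M_N p w) hn
      · intro h
        exact Or.inl ⟨M_N p w, by simpa [ih] using h⟩
  | and φ ψ ihφ ihψ =>
      show ((w ∈ (M p).N ∧ Sat (M p) φ w ∧ Sat (M p) ψ w) ∨ _) ↔ _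
      rw [show ev p (φ.and ψ) w = (ev p φ w && ev p ψ w) from rfl]
      constructor
      · rintro (⟨_, h1, h2⟩ | ⟨hn, _⟩)
        · simp [(ihφ w).mp h1, (ihψ w).mp h2]
        · exact absurd (M_N p w) hn
      · intro h
        simp only [Bool.and_eq_true] at h
        exact Or.inl ⟨M_N p w, (ihφ w).mpr h.1, (ihψ w).mpr h.2⟩
  | imp φ ψ ihφ ihψ =>
      show ((w ∈ (M p).N ∧ (Sat (M p) φ w → Sat (M p) ψ w)) ∨ _) ↔ _
      rw [show ev p (φ.imp ψ) w = (!(ev p φ w) || ev p ψ w) from rfl]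
      constructor
      · rintro (⟨_, h⟩ | ⟨hn, _⟩)
        · cases hφ : ev p φ w
          · simp
          · simp [(ihψ w).mp (h ((ihφ w).mpr hφ))]
        · exact absurd (M_N p w) hn
      · intro h
        refine Or.inl ⟨M_N p w, fun hφ => (ihψ w).mpr ?_⟩
        rw [(ihφ w).mp hφ] at h
        simpa using h
  | box t φ ih =>
      show ((w ∈ (M p).N ∧ ∀ v, (M p).Rt t w v → Sat (M p) φ v) ∨ _) ↔ _
      rw [show ev p (Fm.box t φ) w = ev p φ w from rfl]
      constructor
      · rintro (⟨_, h⟩ | ⟨hn, _⟩)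
        · exact (ih w).mp (h w rfl)
        · exact absurd (M_N p w) hn
      · intro h
        refine Or.inl ⟨M_N p w, fun v hv => ?_⟩
        cases (show v = w from hv)
        exact (ih w).mpr h
  | cond φ ψ ihφ ihψ =>
      show ((w ∈ (M p).N ∧ ∀ v, (M p).Rf φ w v → Sat (M p) ψ v) ∨ _) ↔ _
      refine Iff.trans ?_ (ev_cond_iff p φ ψ w).symm
      constructor
      · rintro (⟨_, h⟩ | ⟨hn, _⟩)
        · refine ⟨fun hφ => (ihψ w).mp (h w (Or.inl ⟨rfl, hφ⟩)), fun h1 h2 => ?_⟩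
          exact (ihψ true).mp (h true (Or.inr ⟨h1, h2, rfl⟩))
        · exact absurd (M_N p w) hn
      · rintro ⟨h1, h2⟩
        refine Or.inl ⟨M_N p w, fun v hv => ?_⟩
        rcases hv with ⟨rfl, hφ⟩ | ⟨ha, hb, rfl⟩
        · exact (ihψ v).mpr (h1 hφ)
        · exact (ihψ true).mpr (h2 ha hb)

lemma isModel (CS : Set Fm) (hCS : IsCS CS) (p : ℕ) : IsModel CS (M p) := by
  refine ⟨?_, ?_, ?_, ?_, ?_, ?_, ?_⟩
  · intro φ w v _ h
    rcases h with ⟨h1, h2⟩ | ⟨h1, h2, h3⟩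
    · subst h1; exact (sat_iff p φ v).mpr h2
    · subst h1; subst h3; exact (sat_iff p _ true).mpr (by simp [ev, pp])
  · intro φ w _ h
    exact Or.inl ⟨rfl, (sat_iff p φ w).mp h⟩
  · intro c φ hmem w v _ hr
    obtain ⟨c', φ', heq, hax⟩ := hCS _ hmem
    cases heq
    exact (sat_iff p _ v).mpr (ax_ev p hax v)
  · intro s t w v _ h; subst h; exact ⟨rfl, rfl⟩
  · intro s t w v _ h φ ψ hs
    subst h
    rw [sat_iff] at hs
    have h1 : (ev p (φ.cond ψ) v && ev p φ v) = true := hs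
    simp only [Bool.and_eq_true] at h1
    replace h1 := And.intro ((ev_cond_iff p φ ψ v).mp h1.1) h1.2
    exact (sat_iff p ψ v).mpr (h1.1.1 h1.2)
  · intro t w _; rfl
  · intro t w v u _ h1 h2; subst h1; exact h2

lemma valid_eqv (CS : Set Fm) (p : ℕ) :
    Valid CS (eqv (Fm.atom p) ((Fm.atom p).and (Fm.atom p))) := by
  intro Mo hMo w hw
  refine Or.inl ⟨hw, Or.inl ⟨hw, fun h => Or.inl ⟨hw, h, h⟩⟩,
    Or.inl ⟨hw, fun h => ?_⟩⟩
  rcases h with ⟨_, h, _⟩ | ⟨hn, _⟩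
  · exact h
  · exact absurd hw hn

lemma not_valid (CS : Set Fm) (hCS : IsCS CS) (p q : ℕ) (hpq : p ≠ q) :
    ¬ Valid CS (eqv ((Fm.atom p).cond (Fm.atom q))
        (((Fm.atom p).and (Fm.atom p)).cond (Fm.atom q))) := by
  intro hv
  have hmain := hv (M p) (isModel CS hCS p) false (M_N p false)
  replace hmain := (sat_iff p _ false).mp hmain
  have hA : ev p ((Fm.atom p).cond (Fm.atom q)) false = true := by
    rw [ev_cond_iff]
    exact ⟨fun h => by simp [ev] at h, fun h => absurd h (by simp [pp])⟩
  have hB : ev p (((Fm.atom p).and (Fm.atom p)).cond (Fm.atom q)) false = false := by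
    rcases h : ev p (((Fm.atom p).and (Fm.atom p)).cond (Fm.atom q)) false
    · rfl
    · rw [ev_cond_iff] at h
      have h2 := h.2 rfl rfl
      simp [ev, Ne.symm hpq] at h2
  rw [show ev p (eqv ((Fm.atom p).cond (Fm.atom q))
        (((Fm.atom p).and (Fm.atom p)).cond (Fm.atom q))) false =
      ((!(ev p ((Fm.atom p).cond (Fm.atom q)) false) ||
          ev p (((Fm.atom p).and (Fm.atom p)).cond (Fm.atom q)) false) &&
       (!(ev p (((Fm.atom p).and (Fm.atom p)).cond (Fm.atom q)) false) ||
          ev p ((Fm.atom p).cond (Fm.atom q)) false)) from rfl,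
    hA, hB] at hmain
  simp at hmain

end Stmt12
end LPCplus

open LPCplus in
/-- The rule RCEA is not validity preserving in LPC⁺_CS;
in particular it fails for φ = p, ψ = p∧p, χ = q (p, q distinct atoms). -/
theorem stmt_12 (CS : Set Fm) (hCS : IsCS CS) :
    (∃ φ ψ χ : Fm,
        Valid CS (eqv φ ψ) ∧ ¬ Valid CS (eqv (φ.cond χ) (ψ.cond χ))) ∧
    (∀ p q : ℕ, p ≠ q →
        Valid CS (eqv (Fm.atom p) ((Fm.atom p).and (Fm.atom p))) ∧
        ¬ Valid CS (eqv ((Fm.atom p).cond (Fm.atom q))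
            (((Fm.atom p).and (Fm.atom p)).cond (Fm.atom q)))) := by
  constructor
  · exact ⟨Fm.atom 0, (Fm.atom 0).and (Fm.atom 0), Fm.atom 1,
      Stmt12.valid_eqv CS 0, Stmt12.not_valid CS hCS 0 1 (by norm_num)⟩
  · intro p q hpq
    exact ⟨Stmt12.valid_eqv CS p, Stmt12.not_valid CS hCS p q hpq⟩
end

section
/- Variable-sharing property for the relevant counterfactual: if ⊨_JRC φ ⇝ ψ, then φ and ψ have at least one atomic proposition in common. -/
namespace JRC

/-- JRC justification terms: variables and sums. -/
inductive Tm : Type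
  | var : ℕ → Tm
  | sum : Tm → Tm → Tm
  deriving DecidableEq

/-- JRC formulas: atoms, intensional negation ∼, ∧, relevant conditional →,
relevant counterfactual ⇝, and justification assertions [t]φ. -/
inductive Fm : Type
  | atom : ℕ → Fm
  | snot : Fm → Fm          -- ∼φ
  | and  : Fm → Fm → Fm
  | rimp : Fm → Fm → Fm     -- φ → ψ (relevant conditional)
  | cond : Fm → Fm → Fm     -- φ ⇝ ψ (relevant counterfactual)
  | box  : Tm → Fm → Fm
  deriving DecidableEq

/-- Extensional disjunction φ ∨ ψ := ∼(∼φ ∧ ∼ψ). -/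
def orF (φ ψ : Fm) : Fm := Fm.snot ((Fm.snot φ).and (Fm.snot ψ))

/-- A Routley relational model. -/
structure Model where
  W : Type
  N : Set W
  N_nonempty : N.Nonempty
  R : W → W → W → Prop
  normality : ∀ w v u : W, w ∈ N → (R w v u ↔ v = u)
  Rf : Fm → W → W → Prop
  Rt : Tm → W → W → Prop
  star : W → W
  star_star : ∀ w : W, star (star w) = w
  V : ℕ → Set W

/-- Truth at a state of a Routley relational model. -/
def Sat (M : Model) : Fm → M.W → Prop
  | .atom p, w => w ∈ M.V p
  | .snot φ, w => ¬ Sat M φ (M.star w)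
  | .and φ ψ, w => Sat M φ w ∧ Sat M ψ w
  | .rimp φ ψ, w => ∀ v u : M.W, M.R w v u → Sat M φ v → Sat M ψ u
  | .cond φ ψ, w => ∀ v : M.W, M.Rf φ w v → Sat M ψ v
  | .box t φ, w => ∀ v : M.W, M.Rt t w v → Sat M φ v

/-- The conditions making a Routley relational model a JRC-model. -/
def IsModel (M : Model) : Prop :=
  (∀ φ (w : M.W), w ∈ M.N → ∀ v, M.Rf φ w v → Sat M φ v) ∧
  (∀ φ (w : M.W), Sat M φ w → M.Rf φ w w) ∧
  (∀ (s t : Tm) (w v : M.W), M.Rt (s.sum t) w v → M.Rt s w v ∧ M.Rt t w v)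

/-- JRC-validity. -/
def Valid (φ : Fm) : Prop :=
  ∀ M : Model, IsModel M → ∀ w ∈ M.N, Sat M φ w

/-- Local semantic consequence in JRC. -/
def Conseq (T : Set Fm) (φ : Fm) : Prop :=
  ∀ M : Model, IsModel M → ∀ w ∈ M.N, (∀ ψ ∈ T, Sat M ψ w) → Sat M φ w

/-- The set of atomic propositions occurring in a formula. -/
def atoms : Fm → Set ℕ
  | .atom p => {p}
  | .snot φ => atoms φ
  | .and φ ψ => atoms φ ∪ atoms ψ
  | .rimp φ ψ => atoms φ ∪ atoms ψ
  | .cond φ ψ => atoms φ ∪ atoms ψ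
  | .box _ φ => atoms φ

end JRC

namespace JRCAux
open JRC

/-- Three states: a normal state `n` and a Routley pair `a`, `b`. -/
inductive St : Type | n | a | b
  deriving DecidableEq

def St.star : St → St
  | .n => .n
  | .a => .b
  | .b => .a

/-- The ternary relation. -/
def Rrel : St → St → St → Prop
  | .n, v, u => v = u
  | .a, v, u => v = .b ∧ u = .a
  | .b, v, u => v = .a ∧ u = .b

/-- Truth function, defined by recursion (so that `Rf` can refer to it). -/
def val (A : Set ℕ) : Fm → St → Prop
  | .atom p, x => (p ∈ A ∧ x = .a) ∨ (p ∉ A ∧ x = .b)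
  | .snot χ, x => ¬ val A χ x.star
  | .and χ ξ, x => val A χ x ∧ val A ξ x
  | .rimp χ ξ, x => ∀ v u : St, Rrel x v u → val A χ v → val A ξ u
  | .cond χ ξ, x => ∀ v : St, ((x = .n ∧ val A χ v) ∨ (x ≠ .n ∧ v = x)) → val A ξ v
  | .box _ χ, x => ∀ v : St, v = x → val A χ v

/-- The countermodel. -/
def M (A : Set ℕ) : Model where
  W := St
  N := {St.n}
  N_nonempty := ⟨.n, rfl⟩
  R := Rrel
  normality := by
    intro w v u hw
    cases w with
    | n => exact Iff.rfl
    | a => exact absurd hw (by simp [Set.mem_singleton_iff])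
    | b => exact absurd hw (by simp [Set.mem_singleton_iff])
  Rf := fun χ x v => (x = .n ∧ val A χ v) ∨ (x ≠ .n ∧ v = x)
  Rt := fun _ x v => v = x
  star := St.star
  star_star := by intro w; cases w <;> rfl
  V := fun p => {x | (p ∈ A ∧ x = .a) ∨ (p ∉ A ∧ x = .b)}

/-- Sat in the countermodel coincides with `val`. -/
theorem sat_eq_val (A : Set ℕ) : ∀ (χ : Fm) (x : St), Sat (M A) χ x ↔ val A χ x := by
  intro χ
  induction χ with
  | atom p => intro x; exact Iff.rfl
  | snot χ ih => intro x; exact not_congr (ih _)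
  | and χ ξ ih1 ih2 => intro x; exact and_congr (ih1 x) (ih2 x)
  | rimp χ ξ ih1 ih2 =>
      intro x
      constructor
      · intro h v u hR hχ; exact (ih2 u).1 (h v u hR ((ih1 v).2 hχ))
      · intro h v u hR hχ; exact (ih2 u).2 (h v u hR ((ih1 v).1 hχ))
  | cond χ ξ ih1 ih2 =>
      intro x
      constructor
      · intro h v hv; exact (ih2 v).1 (h v hv)
      · intro h v hv; exact (ih2 v).2 (h v hv)
  | box t χ ih =>
      intro x
      constructor
      · intro h v hv; exact (ih v).1 (h v hv)
      · intro h v hv; exact (ih v).2 (h v hv)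

theorem isModel (A : Set ℕ) : IsModel (M A) := by
  refine ⟨?_, ?_, ?_⟩
  · intro χ w hwN v hRf
    rcases hRf with ⟨_, hv⟩ | ⟨hw, _⟩
    · exact (sat_eq_val A χ v).2 hv
    · exact absurd hwN hw
  · intro χ w hw
    by_cases h : w = St.n
    · subst h; exact Or.inl ⟨rfl, (sat_eq_val A χ _).1 hw⟩
    · exact Or.inr ⟨h, rfl⟩
  · intro s t w v h; exact ⟨h, h⟩

/-- Key lemma: formulas over `A` are true at `a`, false at `b`;
formulas disjoint from `A` are false at `a`, true at `b`. -/
theorem key (A : Set ℕ) : ∀ χ : Fm,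
    ((∀ p ∈ atoms χ, p ∈ A) → val A χ .a ∧ ¬ val A χ .b) ∧
    ((∀ p ∈ atoms χ, p ∉ A) → ¬ val A χ .a ∧ val A χ .b) := by
  intro χ
  induction χ with
  | atom p =>
      constructor
      · intro h
        have hp := h p (by simp [atoms])
        exact ⟨Or.inl ⟨hp, rfl⟩, by rintro (⟨_, h⟩ | ⟨hn, _⟩) <;> simp_all⟩
      · intro h
        have hp := h p (by simp [atoms])
        exact ⟨by rintro (⟨h, _⟩ | ⟨_, h⟩) <;> simp_all, Or.inr ⟨hp, rfl⟩⟩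
  | snot χ ih =>
      constructor
      · intro h
        obtain ⟨h1, h2⟩ := ih.1 h
        exact ⟨h2, fun hc => hc h1⟩
      · intro h
        obtain ⟨h1, h2⟩ := ih.2 h
        exact ⟨fun hc => hc h2, h1⟩
  | and χ ξ ih1 ih2 =>
      constructor
      · intro h
        obtain ⟨a1, b1⟩ := ih1.1 (fun p hp => h p (Or.inl hp))
        obtain ⟨a2, b2⟩ := ih2.1 (fun p hp => h p (Or.inr hp))
        exact ⟨⟨a1, a2⟩, fun hc => b1 hc.1⟩
      · intro h
        obtain ⟨a1, b1⟩ := ih1.2 (fun p hp => h p (Or.inl hp))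
        obtain ⟨a2, b2⟩ := ih2.2 (fun p hp => h p (Or.inr hp))
        exact ⟨fun hc => a1 hc.1, ⟨b1, b2⟩⟩
  | rimp χ ξ ih1 ih2 =>
      constructor
      · intro h
        obtain ⟨a1, b1⟩ := ih1.1 (fun p hp => h p (Or.inl hp))
        obtain ⟨a2, b2⟩ := ih2.1 (fun p hp => h p (Or.inr hp))
        constructor
        · rintro v u ⟨rfl, rfl⟩ hv; exact absurd hv b1
        · intro hc; exact b2 (hc .a .b ⟨rfl, rfl⟩ a1)
      · intro h
        obtain ⟨a1, b1⟩ := ih1.2 (fun p hp => h p (Or.inl hp))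
        obtain ⟨a2, b2⟩ := ih2.2 (fun p hp => h p (Or.inr hp))
        constructor
        · intro hc; exact a2 (hc .b .a ⟨rfl, rfl⟩ b1)
        · rintro v u ⟨rfl, rfl⟩ hv; exact absurd hv a1
  | cond χ ξ ih1 ih2 =>
      constructor
      · intro h
        obtain ⟨a2, b2⟩ := ih2.1 (fun p hp => h p (Or.inr hp))
        constructor
        · rintro v (⟨hn, _⟩ | ⟨_, rfl⟩)
          · exact absurd hn (by simp)
          · exact a2
        · intro hc; exact b2 (hc .b (Or.inr ⟨by simp, rfl⟩))
      · intro h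
        obtain ⟨a2, b2⟩ := ih2.2 (fun p hp => h p (Or.inr hp))
        constructor
        · intro hc; exact a2 (hc .a (Or.inr ⟨by simp, rfl⟩))
        · rintro v (⟨hn, _⟩ | ⟨_, rfl⟩)
          · exact absurd hn (by simp)
          · exact b2
  | box t χ ih =>
      constructor
      · intro h
        obtain ⟨a1, b1⟩ := ih.1 h
        exact ⟨fun v hv => hv ▸ a1, fun hc => b1 (hc .b rfl)⟩
      · intro h
        obtain ⟨a1, b1⟩ := ih.2 h
        exact ⟨fun hc => a1 (hc .a rfl), fun v hv => hv ▸ b1⟩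

end JRCAux


open JRC in
/-- Variable-sharing property: if ⊨_JRC φ ⇝ ψ, then φ and ψ
share at least one atomic proposition. -/
theorem stmt_16 (φ ψ : Fm) (h : Valid (φ.cond ψ)) :
    ∃ p : ℕ, p ∈ atoms φ ∧ p ∈ atoms ψ := by
  by_contra hc
  push_neg at hc
  set A := atoms φ with hA
  have hval := h (JRCAux.M A) (JRCAux.isModel A) .n rfl
  have hsat : ∀ v, JRCAux.val A φ v → JRC.Sat (JRCAux.M A) ψ v := by
    intro v hv
    exact hval v (Or.inl ⟨rfl, hv⟩)
  have hφ : JRCAux.val A φ .a := ((JRCAux.key A φ).1 (fun p hp => hp)).1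
  have hψ : ¬ JRCAux.val A ψ .a :=
    ((JRCAux.key A ψ).2 (fun p hp hpA => hc p hpA hp)).1
  exact hψ ((JRCAux.sat_eq_val A ψ .a).1 (hsat .a hφ))
end

section
/- Soundness of the JRC tableau system: for every finite set of premises T and formula φ, if T ⊢_JRC φ (there is a closed tableau for φ from T), then T ⊨_JRC φ. -/
namespace JRC

/-- Tableau labels: `(i, false)` is the integer label `i`, `(i, true)` is `i♯`. -/
abbrev Label := ℕ × Bool

/-- The label 0. -/
def Label.zero : Label := (0, false)

/-- x̄ : swap `i` and `i♯`. -/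
def Label.flip (x : Label) : Label := (x.1, !x.2)

/-- Nodes of a JRC tableau. -/
inductive Node : Type
  | pos : Fm → Label → Node          -- φ, +x
  | neg : Fm → Label → Node          -- φ, −x
  | rf  : Fm → Label → Label → Node  -- x r_φ y
  | rt  : Tm → Label → Label → Node  -- x r_t y
  | r3  : Label → Label → Label → Node  -- rxyz
  deriving DecidableEq

/-- The labels occurring in a node. -/
def Node.labels : Node → Finset Label
  | .pos _ x => {x}
  | .neg _ x => {x}
  | .rf _ x y => {x, y}
  | .rt _ x y => {x, y}
  | .r3 x y z => {x, y, z}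

/-- The labels occurring on a branch. -/
def branchLabels (S : Finset Node) : Finset Label := S.biUnion Node.labels

/-- The integer `j` is fresh (new) for the branch `S`. -/
def FreshNat (j : ℕ) (S : Finset Node) : Prop :=
  ∀ b : Bool, ((j, b) : Label) ∉ branchLabels S

/-- φ occurs as the antecedent of a conditional ⇝ at a node of the branch. -/
def IsAntecedent (φ : Fm) (S : Finset Node) : Prop :=
  ∃ (ψ : Fm) (x : Label), Node.pos (φ.cond ψ) x ∈ S ∨ Node.neg (φ.cond ψ) x ∈ S

/-- `Closes S`: the branch `S` can be extended, by the JRC tableau rules, to a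
closed tableau (every branch contains some φ,+x together with φ,−x). -/
inductive Closes : Finset Node → Prop
  | contra {S : Finset Node} {φ x} :
      Node.pos φ x ∈ S → Node.neg φ x ∈ S → Closes S
  | tNeg {S φ x} : Node.pos (Fm.snot φ) x ∈ S →
      Closes (insert (Node.neg φ x.flip) S) → Closes S
  | fNeg {S φ x} : Node.neg (Fm.snot φ) x ∈ S →
      Closes (insert (Node.pos φ x.flip) S) → Closes S
  | tAnd {S φ ψ x} : Node.pos (φ.and ψ) x ∈ S →
      Closes (insert (Node.pos φ x) (insert (Node.pos ψ x) S)) → Closes S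
  | fAnd {S φ ψ x} : Node.neg (φ.and ψ) x ∈ S →
      Closes (insert (Node.neg φ x) S) →
      Closes (insert (Node.neg ψ x) S) → Closes S
  | tImp {S φ ψ x y z} : Node.pos (φ.rimp ψ) x ∈ S → Node.r3 x y z ∈ S →
      Closes (insert (Node.neg φ y) S) →
      Closes (insert (Node.pos ψ z) S) → Closes S
  | fImp {S φ ψ x} {j k : ℕ} : Node.neg (φ.rimp ψ) x ∈ S →
      FreshNat j S → FreshNat k S →
      (x = Label.zero → j = k) → (x ≠ Label.zero → j ≠ k) →
      Closes (insert (Node.r3 x (j, false) (k, false))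
        (insert (Node.pos φ (j, false)) (insert (Node.neg ψ (k, false)) S))) →
      Closes S
  | tCond {S φ ψ x y} : Node.pos (φ.cond ψ) x ∈ S → Node.rf φ x y ∈ S →
      Closes (insert (Node.pos ψ y) S) → Closes S
  | fCond {S φ ψ x} {j : ℕ} : Node.neg (φ.cond ψ) x ∈ S → x ≠ Label.zero →
      FreshNat j S →
      Closes (insert (Node.rf φ x (j, false)) (insert (Node.neg ψ (j, false)) S)) →
      Closes S
  | fCondZero {S φ ψ} {j : ℕ} : Node.neg (φ.cond ψ) Label.zero ∈ S →
      FreshNat j S →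
      Closes (insert (Node.rf φ Label.zero (j, false))
        (insert (Node.pos φ (j, false)) (insert (Node.neg ψ (j, false)) S))) →
      Closes S
  | tBox {S t φ x y} : Node.pos (Fm.box t φ) x ∈ S → Node.rt t x y ∈ S →
      Closes (insert (Node.pos φ y) S) → Closes S
  | fBox {S t φ x} {j : ℕ} : Node.neg (Fm.box t φ) x ∈ S →
      FreshNat j S →
      Closes (insert (Node.rt t x (j, false)) (insert (Node.neg φ (j, false)) S)) →
      Closes S
  | cutR {S φ x} : IsAntecedent φ S → x ∈ branchLabels S →
      Closes (insert (Node.neg φ x) S) →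
      Closes (insert (Node.pos φ x) (insert (Node.rf φ x x) S)) → Closes S
  | rPlus {S s t x y} : Node.rt (Tm.sum s t) x y ∈ S →
      Closes (insert (Node.rt s x y) (insert (Node.rt t x y) S)) → Closes S
  | norm {S : Finset Node} {x} : x ∈ branchLabels S →
      Closes (insert (Node.r3 Label.zero x x) S) → Closes S

/-- T ⊢_JRC φ: there is a closed tableau whose root consists of ψ,+0 for every
premise ψ ∈ T together with φ,−0. -/
def TabProv (T : Finset Fm) (φ : Fm) : Prop :=
  Closes (insert (Node.neg φ Label.zero) (T.image (fun ψ => Node.pos ψ Label.zero)))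


section Soundness

variable (M : Model)

/-- Interpret a label into a model: `i♯` denotes the star of the world denoted by `i`. -/
def interp (g : ℕ → M.W) (x : Label) : M.W :=
  if x.2 then M.star (g x.1) else g x.1

lemma interp_flip (g : ℕ → M.W) (x : Label) :
    interp M g x.flip = M.star (interp M g x) := by
  rcases x with ⟨i, b⟩
  cases b <;> simp [interp, Label.flip, M.star_star]

lemma interp_zero (g : ℕ → M.W) : interp M g Label.zero = g 0 := rfl

lemma interp_update {g : ℕ → M.W} {j : ℕ} {w : M.W} {x : Label} (hx : x.1 ≠ j) :
    interp M (Function.update g j w) x = interp M g x := by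
  unfold interp
  rw [Function.update_of_ne hx]

lemma interp_update_same (g : ℕ → M.W) (j : ℕ) (w : M.W) :
    interp M (Function.update g j w) (j, false) = w := by
  simp [interp]

/-- Satisfaction of a tableau node under a label interpretation. -/
def SatNode (g : ℕ → M.W) : Node → Prop
  | .pos φ x => Sat M φ (interp M g x)
  | .neg φ x => ¬ Sat M φ (interp M g x)
  | .rf φ x y => M.Rf φ (interp M g x) (interp M g y)
  | .rt t x y => M.Rt t (interp M g x) (interp M g y)
  | .r3 x y z => M.R (interp M g x) (interp M g y) (interp M g z)

lemma mem_branchLabels {x : Label} {S : Finset Node} :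
    x ∈ branchLabels S ↔ ∃ n ∈ S, x ∈ n.labels := Finset.mem_biUnion

lemma bl_insert {x : Label} {n : Node} {S : Finset Node} (h : x ∈ branchLabels S) :
    x ∈ branchLabels (insert n S) := by
  rw [mem_branchLabels] at h ⊢
  obtain ⟨m, hm, hx⟩ := h
  exact ⟨m, Finset.mem_insert_of_mem hm, hx⟩

lemma fresh_fst {j : ℕ} {S : Finset Node} (hf : FreshNat j S) {n : Node} (hn : n ∈ S)
    {x : Label} (hx : x ∈ n.labels) : x.1 ≠ j := by
  intro h
  exact hf x.2 (mem_branchLabels.mpr ⟨n, hn, by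
    rwa [show ((j, x.2) : Label) = x from Prod.ext h.symm rfl]⟩)

lemma fresh_ne_zero {j : ℕ} {S : Finset Node} (hf : FreshNat j S)
    (hz : Label.zero ∈ branchLabels S) : j ≠ 0 := by
  intro h
  exact hf false (by rw [h]; exact hz)

lemma satNode_update (n : Node) (g : ℕ → M.W) (j : ℕ) (w : M.W)
    (hj : ∀ x ∈ n.labels, x.1 ≠ j) :
    SatNode M (Function.update g j w) n ↔ SatNode M g n := by
  cases n with
  | pos φ x =>
      simp only [SatNode, interp_update M (hj x (by simp [Node.labels]))]
  | neg φ x =>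
      simp only [SatNode, interp_update M (hj x (by simp [Node.labels]))]
  | rf φ x y =>
      simp only [SatNode, interp_update M (hj x (by simp [Node.labels])),
        interp_update M (hj y (by simp [Node.labels]))]
  | rt t x y =>
      simp only [SatNode, interp_update M (hj x (by simp [Node.labels])),
        interp_update M (hj y (by simp [Node.labels]))]
  | r3 x y z =>
      simp only [SatNode, interp_update M (hj x (by simp [Node.labels])),
        interp_update M (hj y (by simp [Node.labels])),
        interp_update M (hj z (by simp [Node.labels]))]

lemma satS_update {S : Finset Node} {j : ℕ} (hf : FreshNat j S) (g : ℕ → M.W) (w : M.W)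
    (hS : ∀ n ∈ S, SatNode M g n) :
    ∀ n ∈ S, SatNode M (Function.update g j w) n :=
  fun n hn => (satNode_update M n g j w (fun x hx => fresh_fst hf hn hx)).mpr (hS n hn)

theorem sound (hM : IsModel M) {S : Finset Node} (h : Closes S) :
    Label.zero ∈ branchLabels S →
    ∀ g : ℕ → M.W, g 0 ∈ M.N → (∀ n ∈ S, SatNode M g n) → False := by
  induction h with
  | @contra S φ x h1 h2 =>
      intro _ g _ hS
      exact (hS _ h2) (hS _ h1)
  | @tNeg S φ x h1 _ ih =>
      intro hz g hg hS
      refine ih (bl_insert hz) g hg ?_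
      intro n hn
      rcases Finset.mem_insert.mp hn with rfl | hn
      · have h0 := hS _ h1
        simp only [SatNode, Sat] at h0 ⊢
        rw [interp_flip]
        exact h0
      · exact hS n hn
  | @fNeg S φ x h1 _ ih =>
      intro hz g hg hS
      refine ih (bl_insert hz) g hg ?_
      intro n hn
      rcases Finset.mem_insert.mp hn with rfl | hn
      · have h0 := hS _ h1
        simp only [SatNode, Sat, not_not] at h0 ⊢
        rw [interp_flip]
        exact h0
      · exact hS n hn
  | @tAnd S φ ψ x h1 _ ih =>
      intro hz g hg hS
      refine ih (bl_insert (bl_insert hz)) g hg ?_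
      intro n hn
      have h0 := hS _ h1
      simp only [SatNode, Sat] at h0
      rcases Finset.mem_insert.mp hn with rfl | hn
      · exact h0.1
      rcases Finset.mem_insert.mp hn with rfl | hn
      · exact h0.2
      · exact hS n hn
  | @fAnd S φ ψ x h1 _ _ ih1 ih2 =>
      intro hz g hg hS
      have h0 := hS _ h1
      simp only [SatNode, Sat, not_and_or] at h0
      rcases h0 with h0 | h0
      · refine ih1 (bl_insert hz) g hg ?_
        intro n hn
        rcases Finset.mem_insert.mp hn with rfl | hn
        · exact h0
        · exact hS n hn
      · refine ih2 (bl_insert hz) g hg ?_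
        intro n hn
        rcases Finset.mem_insert.mp hn with rfl | hn
        · exact h0
        · exact hS n hn
  | @tImp S φ ψ x y z h1 h2 _ _ ih1 ih2 =>
      intro hz g hg hS
      have himp := hS _ h1
      have hr := hS _ h2
      simp only [SatNode, Sat] at himp hr
      by_cases hφ : Sat M φ (interp M g y)
      · refine ih2 (bl_insert hz) g hg ?_
        intro n hn
        rcases Finset.mem_insert.mp hn with rfl | hn
        · exact himp _ _ hr hφ
        · exact hS n hn
      · refine ih1 (bl_insert hz) g hg ?_
        intro n hn
        rcases Finset.mem_insert.mp hn with rfl | hn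
        · exact hφ
        · exact hS n hn
  | @fImp S φ ψ x j k h1 hfj hfk hjk hne _ ih =>
      intro hz g hg hS
      have h0 := hS _ h1
      simp only [SatNode, Sat] at h0
      push_neg at h0
      obtain ⟨v, u, hR, hv, hu⟩ := h0
      have hj0 : j ≠ 0 := fresh_ne_zero hfj hz
      have hk0 : k ≠ 0 := fresh_ne_zero hfk hz
      have hxj : x.1 ≠ j := fresh_fst hfj h1 (by simp [Node.labels])
      have hxk : x.1 ≠ k := fresh_fst hfk h1 (by simp [Node.labels])
      by_cases hx0 : x = Label.zero
      · have hjk' : j = k := hjk hx0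
        subst hjk'
        have hvu : v = u := by
          refine (M.normality _ v u ?_).mp hR
          rw [hx0, interp_zero]
          exact hg
        subst hvu
        refine ih (bl_insert (bl_insert (bl_insert hz))) (Function.update g j v) ?_ ?_
        · show Function.update g j v 0 ∈ M.N
          rw [Function.update_of_ne (Ne.symm hj0)]
          exact hg
        · intro n hn
          rcases Finset.mem_insert.mp hn with rfl | hn
          · show M.R (interp M (Function.update g j v) x)
              (interp M (Function.update g j v) (j, false))
              (interp M (Function.update g j v) (j, false))
            rw [interp_update M hxj, interp_update_same]
            exact hR
          rcases Finset.mem_insert.mp hn with rfl | hn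
          · show Sat M φ (interp M (Function.update g j v) (j, false))
            rw [interp_update_same]
            exact hv
          rcases Finset.mem_insert.mp hn with rfl | hn
          · show ¬ Sat M ψ (interp M (Function.update g j v) (j, false))
            rw [interp_update_same]
            exact hu
          · exact satS_update M hfj g v hS n hn
      · have hjk' : j ≠ k := hne hx0
        set g' := Function.update (Function.update g j v) k u with hg'def
        refine ih (bl_insert (bl_insert (bl_insert hz))) g' ?_ ?_
        · show Function.update (Function.update g j v) k u 0 ∈ M.N
          rw [Function.update_of_ne (Ne.symm hk0), Function.update_of_ne (Ne.symm hj0)]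
          exact hg
        · have hgx : interp M g' x = interp M g x := by
            rw [hg'def, interp_update M hxk, interp_update M hxj]
          have hgj : interp M g' (j, false) = v := by
            rw [hg'def, interp_update M (show ((j, false) : Label).1 ≠ k from hjk'),
              interp_update_same]
          have hgk : interp M g' (k, false) = u := by
            rw [hg'def, interp_update_same]
          intro n hn
          rcases Finset.mem_insert.mp hn with rfl | hn
          · show M.R (interp M g' x) (interp M g' (j, false)) (interp M g' (k, false))
            rw [hgx, hgj, hgk]
            exact hR
          rcases Finset.mem_insert.mp hn with rfl | hn
          · show Sat M φ (interp M g' (j, false))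
            rw [hgj]
            exact hv
          rcases Finset.mem_insert.mp hn with rfl | hn
          · show ¬ Sat M ψ (interp M g' (k, false))
            rw [hgk]
            exact hu
          · exact satS_update M hfk _ u (satS_update M hfj g v hS) n hn
  | @tCond S φ ψ x y h1 h2 _ ih =>
      intro hz g hg hS
      have hc := hS _ h1
      have hr := hS _ h2
      simp only [SatNode, Sat] at hc hr
      refine ih (bl_insert hz) g hg ?_
      intro n hn
      rcases Finset.mem_insert.mp hn with rfl | hn
      · exact hc _ hr
      · exact hS n hn
  | @fCond S φ ψ x j h1 hx0 hfj _ ih =>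
      intro hz g hg hS
      have h0 := hS _ h1
      simp only [SatNode, Sat] at h0
      push_neg at h0
      obtain ⟨v, hRf, hv⟩ := h0
      have hj0 : j ≠ 0 := fresh_ne_zero hfj hz
      have hxj : x.1 ≠ j := fresh_fst hfj h1 (by simp [Node.labels])
      refine ih (bl_insert (bl_insert hz)) (Function.update g j v) ?_ ?_
      · show Function.update g j v 0 ∈ M.N
        rw [Function.update_of_ne (Ne.symm hj0)]
        exact hg
      · intro n hn
        rcases Finset.mem_insert.mp hn with rfl | hn
        · show M.Rf φ (interp M (Function.update g j v) x)
            (interp M (Function.update g j v) (j, false))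
          rw [interp_update M hxj, interp_update_same]
          exact hRf
        rcases Finset.mem_insert.mp hn with rfl | hn
        · show ¬ Sat M ψ (interp M (Function.update g j v) (j, false))
          rw [interp_update_same]
          exact hv
        · exact satS_update M hfj g v hS n hn
  | @fCondZero S φ ψ j h1 hfj _ ih =>
      intro hz g hg hS
      have h0 := hS _ h1
      simp only [SatNode, Sat] at h0
      push_neg at h0
      obtain ⟨v, hRf, hv⟩ := h0
      have hj0 : j ≠ 0 := fresh_ne_zero hfj hz
      have hφv : Sat M φ v := hM.1 φ (interp M g Label.zero) (by rw [interp_zero]; exact hg) v hRf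
      refine ih (bl_insert (bl_insert (bl_insert hz))) (Function.update g j v) ?_ ?_
      · show Function.update g j v 0 ∈ M.N
        rw [Function.update_of_ne (Ne.symm hj0)]
        exact hg
      · intro n hn
        rcases Finset.mem_insert.mp hn with rfl | hn
        · show M.Rf φ (interp M (Function.update g j v) Label.zero)
            (interp M (Function.update g j v) (j, false))
          rw [interp_update M (show (Label.zero).1 ≠ j from Ne.symm hj0), interp_update_same]
          exact hRf
        rcases Finset.mem_insert.mp hn with rfl | hn
        · show Sat M φ (interp M (Function.update g j v) (j, false))
          rw [interp_update_same]
          exact hφv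
        rcases Finset.mem_insert.mp hn with rfl | hn
        · show ¬ Sat M ψ (interp M (Function.update g j v) (j, false))
          rw [interp_update_same]
          exact hv
        · exact satS_update M hfj g v hS n hn
  | @tBox S t φ x y h1 h2 _ ih =>
      intro hz g hg hS
      have hc := hS _ h1
      have hr := hS _ h2
      simp only [SatNode, Sat] at hc hr
      refine ih (bl_insert hz) g hg ?_
      intro n hn
      rcases Finset.mem_insert.mp hn with rfl | hn
      · exact hc _ hr
      · exact hS n hn
  | @fBox S t φ x j h1 hfj _ ih =>
      intro hz g hg hS
      have h0 := hS _ h1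
      simp only [SatNode, Sat] at h0
      push_neg at h0
      obtain ⟨v, hRt, hv⟩ := h0
      have hj0 : j ≠ 0 := fresh_ne_zero hfj hz
      have hxj : x.1 ≠ j := fresh_fst hfj h1 (by simp [Node.labels])
      refine ih (bl_insert (bl_insert hz)) (Function.update g j v) ?_ ?_
      · show Function.update g j v 0 ∈ M.N
        rw [Function.update_of_ne (Ne.symm hj0)]
        exact hg
      · intro n hn
        rcases Finset.mem_insert.mp hn with rfl | hn
        · show M.Rt t (interp M (Function.update g j v) x)
            (interp M (Function.update g j v) (j, false))
          rw [interp_update M hxj, interp_update_same]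
          exact hRt
        rcases Finset.mem_insert.mp hn with rfl | hn
        · show ¬ Sat M φ (interp M (Function.update g j v) (j, false))
          rw [interp_update_same]
          exact hv
        · exact satS_update M hfj g v hS n hn
  | @cutR S φ x hant hxbl _ _ ih1 ih2 =>
      intro hz g hg hS
      by_cases hφ : Sat M φ (interp M g x)
      · refine ih2 (bl_insert (bl_insert hz)) g hg ?_
        intro n hn
        rcases Finset.mem_insert.mp hn with rfl | hn
        · exact hφ
        rcases Finset.mem_insert.mp hn with rfl | hn
        · exact hM.2.1 φ _ hφ
        · exact hS n hn
      · refine ih1 (bl_insert hz) g hg ?_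
        intro n hn
        rcases Finset.mem_insert.mp hn with rfl | hn
        · exact hφ
        · exact hS n hn
  | @rPlus S s t x y h1 _ ih =>
      intro hz g hg hS
      have h0 := hS _ h1
      have h0' := hM.2.2 s t _ _ h0
      refine ih (bl_insert (bl_insert hz)) g hg ?_
      intro n hn
      rcases Finset.mem_insert.mp hn with rfl | hn
      · exact h0'.1
      rcases Finset.mem_insert.mp hn with rfl | hn
      · exact h0'.2
      · exact hS n hn
  | @norm S x hx _ ih =>
      intro hz g hg hS
      refine ih (bl_insert hz) g hg ?_
      intro n hn
      rcases Finset.mem_insert.mp hn with rfl | hn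
      · show M.R (interp M g Label.zero) (interp M g x) (interp M g x)
        refine (M.normality _ _ _ ?_).mpr rfl
        rw [interp_zero]
        exact hg
      · exact hS n hn

end Soundness

end JRC

open JRC in
/-- Soundness of the JRC tableau system: if there is a closed tableau
for φ from the finite set of premises T, then T ⊨_JRC φ. -/
theorem stmt_17 (T : Finset Fm) (φ : Fm) (h : TabProv T φ) :
    Conseq (↑T : Set Fm) φ := by
  intro M hM w hw hT
  by_contra hφ
  refine sound M hM h ?_ (fun _ => w) hw ?_
  · exact mem_branchLabels.mpr ⟨Node.neg φ Label.zero, Finset.mem_insert_self _ _,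
      by simp [Node.labels]⟩
  · intro n hn
    rcases Finset.mem_insert.mp hn with rfl | hn
    · exact hφ
    · obtain ⟨ψ, hψ, rfl⟩ := Finset.mem_image.mp hn
      exact hT ψ (by exact_mod_cast hψ)
end

section
/- Completeness of the JRC tableau system: for every finite set of premises T and formula φ, if T ⊨_JRC φ, then T ⊢_JRC φ (there is a closed tableau for φ from T). -/
namespace JRC

/-! ### Countability of terms, formulas -/

private def encT : Tm → ℕ
  | .var n => Nat.pair 0 n
  | .sum s t => Nat.pair 1 (Nat.pair (encT s) (encT t))

private theorem encT_inj : Function.Injective encT := by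
  intro a
  induction a with
  | var n => intro b h; cases b <;> simp [encT, Nat.pair_eq_pair] at h; simp [h]
  | sum s t ihs iht =>
    intro b h; cases b <;> simp [encT, Nat.pair_eq_pair] at h
    rw [ihs h.1, iht h.2]

instance : Countable Tm := ⟨⟨encT, encT_inj⟩⟩

private def encF : Fm → ℕ
  | .atom p => Nat.pair 0 p
  | .snot φ => Nat.pair 1 (encF φ)
  | .and φ ψ => Nat.pair 2 (Nat.pair (encF φ) (encF ψ))
  | .rimp φ ψ => Nat.pair 3 (Nat.pair (encF φ) (encF ψ))
  | .cond φ ψ => Nat.pair 4 (Nat.pair (encF φ) (encF ψ))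
  | .box t φ => Nat.pair 5 (Nat.pair (encT t) (encF φ))

private theorem encF_inj : Function.Injective encF := by
  intro a
  induction a with
  | atom p => intro b h; cases b <;> simp [encF, Nat.pair_eq_pair] at h; simp [h]
  | snot φ ih => intro b h; cases b <;> simp [encF, Nat.pair_eq_pair] at h; rw [ih h]
  | and φ ψ ih1 ih2 =>
    intro b h; cases b <;> simp [encF, Nat.pair_eq_pair] at h; rw [ih1 h.1, ih2 h.2]
  | rimp φ ψ ih1 ih2 =>
    intro b h; cases b <;> simp [encF, Nat.pair_eq_pair] at h; rw [ih1 h.1, ih2 h.2]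
  | cond φ ψ ih1 ih2 =>
    intro b h; cases b <;> simp [encF, Nat.pair_eq_pair] at h; rw [ih1 h.1, ih2 h.2]
  | box t φ ih =>
    intro b h; cases b <;> simp [encF, Nat.pair_eq_pair] at h; rw [encT_inj h.1, ih h.2]

instance : Countable Fm := ⟨⟨encF, encF_inj⟩⟩

end JRC
namespace JRC

@[simp] theorem Label.flip_flip (x : Label) : x.flip.flip = x := by
  simp [Label.flip]

/-- Labels occurring in a set of nodes. -/
def LabS (B : Set Node) : Set Label := {x | ∃ n ∈ B, x ∈ n.labels}

theorem LabS_mono {B B' : Set Node} (h : B ⊆ B') : LabS B ⊆ LabS B' :=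
  fun _ ⟨n, hn, hx⟩ => ⟨n, h hn, hx⟩

theorem mem_LabS_coe {S : Finset Node} {x : Label} :
    x ∈ LabS (↑S : Set Node) ↔ x ∈ branchLabels S := by
  simp [LabS, branchLabels, Finset.mem_biUnion]

theorem pos_labs {B : Set Node} {φ x} (h : Node.pos φ x ∈ B) : x ∈ LabS B :=
  ⟨_, h, by simp [Node.labels]⟩

theorem neg_labs {B : Set Node} {φ x} (h : Node.neg φ x ∈ B) : x ∈ LabS B :=
  ⟨_, h, by simp [Node.labels]⟩

theorem rf_labs {B : Set Node} {φ x y} (h : Node.rf φ x y ∈ B) :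
    x ∈ LabS B ∧ y ∈ LabS B :=
  ⟨⟨_, h, by simp [Node.labels]⟩, ⟨_, h, by simp [Node.labels]⟩⟩

theorem rt_labs {B : Set Node} {t x y} (h : Node.rt t x y ∈ B) :
    x ∈ LabS B ∧ y ∈ LabS B :=
  ⟨⟨_, h, by simp [Node.labels]⟩, ⟨_, h, by simp [Node.labels]⟩⟩

theorem r3_labs {B : Set Node} {x y z} (h : Node.r3 x y z ∈ B) :
    x ∈ LabS B ∧ y ∈ LabS B ∧ z ∈ LabS B :=
  ⟨⟨_, h, by simp [Node.labels]⟩, ⟨_, h, by simp [Node.labels]⟩,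
    ⟨_, h, by simp [Node.labels]⟩⟩

open Classical in
/-- The Routley star on labels relative to a branch. -/
noncomputable def starL (B : Set Node) (x : Label) : Label :=
  if x.flip ∈ LabS B then x.flip else x

theorem starL_eq {B : Set Node} {x : Label} (h : x.flip ∈ LabS B) :
    starL B x = x.flip := by simp [starL, h]

/-- Semantic value of formulas at labels, read off a branch. -/
def val (B : Set Node) : Fm → Label → Prop
  | .atom p, x => Node.pos (.atom p) x ∈ B
  | .snot φ, x => ¬ val B φ (starL B x)
  | .and φ ψ, x => val B φ x ∧ val B ψ x
  | .rimp φ ψ, x => ∀ y z : Label, y ∈ LabS B → z ∈ LabS B →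
      (Node.r3 x y z ∈ B ∨ (x = Label.zero ∧ y = z)) → val B φ y → val B ψ z
  | .cond φ ψ, x => ∀ y : Label, y ∈ LabS B →
      (Node.rf φ x y ∈ B ∨ (x = y ∧ val B φ x)) → val B ψ y
  | .box t φ, x => ∀ y : Label, y ∈ LabS B → Node.rt t x y ∈ B → val B φ y

/-- Hintikka (downward-saturated, open) sets of nodes. -/
structure Hin (B : Set Node) : Prop where
  opn : ∀ φ x, Node.pos φ x ∈ B → Node.neg φ x ∈ B → False
  inv1 : ∀ y z, Node.r3 Label.zero y z ∈ B → y = z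
  inv2 : ∀ χ y, Node.rf χ Label.zero y ∈ B → Node.pos χ y ∈ B
  tneg : ∀ φ x, Node.pos φ.snot x ∈ B → Node.neg φ x.flip ∈ B
  fneg : ∀ φ x, Node.neg φ.snot x ∈ B → Node.pos φ x.flip ∈ B
  tand : ∀ φ ψ x, Node.pos (φ.and ψ) x ∈ B → Node.pos φ x ∈ B ∧ Node.pos ψ x ∈ B
  fand : ∀ φ ψ x, Node.neg (φ.and ψ) x ∈ B → Node.neg φ x ∈ B ∨ Node.neg ψ x ∈ B
  timp : ∀ φ ψ x y z, Node.pos (φ.rimp ψ) x ∈ B → Node.r3 x y z ∈ B →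
      Node.neg φ y ∈ B ∨ Node.pos ψ z ∈ B
  fimp : ∀ φ ψ x, Node.neg (φ.rimp ψ) x ∈ B → ∃ j k : Label,
      Node.r3 x j k ∈ B ∧ Node.pos φ j ∈ B ∧ Node.neg ψ k ∈ B
  tcond : ∀ φ ψ x y, Node.pos (φ.cond ψ) x ∈ B → Node.rf φ x y ∈ B →
      Node.pos ψ y ∈ B
  fcond : ∀ φ ψ x, Node.neg (φ.cond ψ) x ∈ B → ∃ j : Label,
      Node.rf φ x j ∈ B ∧ Node.neg ψ j ∈ B
  tbox : ∀ t φ x y, Node.pos (Fm.box t φ) x ∈ B → Node.rt t x y ∈ B →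
      Node.pos φ y ∈ B
  fbox : ∀ t φ x, Node.neg (Fm.box t φ) x ∈ B → ∃ j : Label,
      Node.rt t x j ∈ B ∧ Node.neg φ j ∈ B
  cutr : ∀ φ x, (∃ χ w, Node.pos (φ.cond χ) w ∈ B ∨ Node.neg (φ.cond χ) w ∈ B) →
      x ∈ LabS B → Node.neg φ x ∈ B ∨ (Node.pos φ x ∈ B ∧ Node.rf φ x x ∈ B)
  rplus : ∀ s t x y, Node.rt (Tm.sum s t) x y ∈ B →
      Node.rt s x y ∈ B ∧ Node.rt t x y ∈ B
  nrm : ∀ x, x ∈ LabS B → Node.r3 Label.zero x x ∈ B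

/-- The truth lemma for Hintikka sets. -/
theorem truth {B : Set Node} (hB : Hin B) : ∀ φ x,
    (Node.pos φ x ∈ B → val B φ x) ∧ (Node.neg φ x ∈ B → ¬ val B φ x) := by
  intro φ
  induction φ with
  | atom p =>
    intro x
    exact ⟨fun h => h, fun h hv => hB.opn _ _ hv h⟩
  | snot φ ih =>
    intro x
    constructor
    · intro h
      have hn := hB.tneg φ x h
      rw [val, starL_eq (neg_labs hn)]
      exact (ih x.flip).2 hn
    · intro h hv
      have hp := hB.fneg φ x h
      rw [val, starL_eq (pos_labs hp)] at hv
      exact hv ((ih x.flip).1 hp)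
  | and φ ψ ih1 ih2 =>
    intro x
    constructor
    · intro h
      obtain ⟨h1, h2⟩ := hB.tand φ ψ x h
      exact ⟨(ih1 x).1 h1, (ih2 x).1 h2⟩
    · intro h hv
      rcases hB.fand φ ψ x h with h1 | h2
      · exact (ih1 x).2 h1 hv.1
      · exact (ih2 x).2 h2 hv.2
  | rimp φ ψ ih1 ih2 =>
    intro x
    constructor
    · intro h
      intro y z hy hz hr hφ
      have hr3 : Node.r3 x y z ∈ B := by
        rcases hr with hr | ⟨rfl, rfl⟩
        · exact hr
        · exact hB.nrm y hy
      rcases hB.timp φ ψ x y z h hr3 with hn | hp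
      · exact absurd hφ ((ih1 y).2 hn)
      · exact (ih2 z).1 hp
    · intro h hv
      obtain ⟨j, k, h1, h2, h3⟩ := hB.fimp φ ψ x h
      have hjk := r3_labs h1
      exact (ih2 k).2 h3 (hv j k hjk.2.1 hjk.2.2 (Or.inl h1) ((ih1 j).1 h2))
  | cond φ ψ ih1 ih2 =>
    intro x
    constructor
    · intro h
      intro y hy hr
      rcases hr with hr | ⟨rfl, hφ⟩
      · exact (ih2 y).1 (hB.tcond φ ψ x y h hr)
      · rcases hB.cutr φ x ⟨ψ, x, Or.inl h⟩ (pos_labs h) with hn | ⟨_, hrf⟩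
        · exact absurd hφ ((ih1 x).2 hn)
        · exact (ih2 x).1 (hB.tcond φ ψ x x h hrf)
    · intro h hv
      obtain ⟨j, h1, h2⟩ := hB.fcond φ ψ x h
      exact (ih2 j).2 h2 (hv j (rf_labs h1).2 (Or.inl h1))
  | box t φ ih =>
    intro x
    constructor
    · intro h y hy hr
      exact (ih y).1 (hB.tbox t φ x y h hr)
    · intro h hv
      obtain ⟨j, h1, h2⟩ := hB.fbox t φ x h
      exact (ih j).2 h2 (hv j (rt_labs h1).2 h1)

open Classical in
/-- The countermodel built from a Hintikka set. -/
noncomputable def mdl (B : Set Node) (hB : Hin B) (h0 : Label.zero ∈ LabS B) :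
    Model where
  W := {x : Label // x ∈ LabS B}
  N := {w | w.1 = Label.zero}
  N_nonempty := ⟨⟨Label.zero, h0⟩, rfl⟩
  R := fun a b c => Node.r3 a.1 b.1 c.1 ∈ B ∨ (a.1 = Label.zero ∧ b = c)
  normality := by
    intro w v u hw
    constructor
    · rintro (h | ⟨_, h⟩)
      · exact Subtype.ext (hB.inv1 _ _ (hw ▸ h))
      · exact h
    · intro h; exact Or.inr ⟨hw, h⟩
  Rf := fun χ a b => Node.rf χ a.1 b.1 ∈ B ∨ (a = b ∧ val B χ a.1)
  Rt := fun t a b => Node.rt t a.1 b.1 ∈ B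
  star := fun a => if h : a.1.flip ∈ LabS B then ⟨a.1.flip, h⟩ else a
  star_star := by
    intro a
    by_cases h : a.1.flip ∈ LabS B
    · simp only [h, dif_pos]
      have : (a.1.flip.flip) = a.1 := Label.flip_flip _
      simp only [this, a.2, dif_pos]
    · simp only [h, dif_neg, not_false_iff]
  V := fun p => {a | Node.pos (.atom p) a.1 ∈ B}

theorem mdl_star_val (B : Set Node) (hB : Hin B) (h0 : Label.zero ∈ LabS B)
    (w : (mdl B hB h0).W) : ((mdl B hB h0).star w).1 = starL B w.1 := by
  by_cases h : w.1.flip ∈ LabS B <;> simp [mdl, starL, h]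

theorem sat_iff_val (B : Set Node) (hB : Hin B) (h0 : Label.zero ∈ LabS B) :
    ∀ φ (w : (mdl B hB h0).W), Sat (mdl B hB h0) φ w ↔ val B φ w.1 := by
  intro φ
  induction φ with
  | atom p => intro w; exact Iff.rfl
  | snot φ ih =>
    intro w
    show (¬ Sat _ φ _) ↔ ¬ val B φ (starL B w.1)
    rw [ih, mdl_star_val]
  | and φ ψ ih1 ih2 =>
    intro w
    show (Sat _ φ w ∧ Sat _ ψ w) ↔ _
    rw [ih1, ih2]; exact Iff.rfl
  | rimp φ ψ ih1 ih2 =>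
    intro w
    constructor
    · intro h y z hy hz hr hφ
      have := h ⟨y, hy⟩ ⟨z, hz⟩
        (by rcases hr with hr | ⟨h1, h2⟩
            · exact Or.inl hr
            · exact Or.inr ⟨h1, Subtype.ext h2⟩)
        ((ih1 ⟨y, hy⟩).2 hφ)
      exact (ih2 ⟨z, hz⟩).1 this
    · intro h v u hr hφ
      refine (ih2 u).2 (h v.1 u.1 v.2 u.2 ?_ ((ih1 v).1 hφ))
      rcases hr with hr | ⟨h1, h2⟩
      · exact Or.inl hr
      · exact Or.inr ⟨h1, congrArg Subtype.val h2⟩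
  | cond φ ψ ih1 ih2 =>
    intro w
    constructor
    · intro h y hy hr
      refine (ih2 ⟨y, hy⟩).1 (h ⟨y, hy⟩ ?_)
      rcases hr with hr | ⟨h1, h2⟩
      · exact Or.inl hr
      · exact Or.inr ⟨Subtype.ext h1, h2⟩
    · intro h v hr
      refine (ih2 v).2 (h v.1 v.2 ?_)
      rcases hr with hr | ⟨h1, h2⟩
      · exact Or.inl hr
      · exact Or.inr ⟨congrArg Subtype.val h1, h2⟩
  | box t φ ih =>
    intro w
    constructor
    · intro h y hy hr
      exact (ih ⟨y, hy⟩).1 (h ⟨y, hy⟩ hr)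
    · intro h v hr
      exact (ih v).2 (h v.1 v.2 hr)

theorem mdl_isModel (B : Set Node) (hB : Hin B) (h0 : Label.zero ∈ LabS B) :
    IsModel (mdl B hB h0) := by
  refine ⟨?_, ?_, ?_⟩
  · intro φ w hw v hrf
    rcases hrf with hr | ⟨rfl, hv⟩
    · have := hB.inv2 φ v.1 (hw ▸ hr)
      exact (sat_iff_val B hB h0 φ v).2 ((truth hB φ v.1).1 this)
    · exact (sat_iff_val B hB h0 φ w).2 hv
  · intro φ w hs
    exact Or.inr ⟨rfl, (sat_iff_val B hB h0 φ w).1 hs⟩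
  · intro s t w v h
    exact hB.rplus s t w.1 v.1 h

end JRC
namespace JRC

/-! ### Tasks and the saturation procedure -/

inductive Tag : Type
  | tneg | fneg | tand | fand | timp | fimp | tcond | fcond
  | tbox | fbox | cutr | rplus | nrm
  deriving DecidableEq

private def encG : Tag → ℕ
  | .tneg => 0 | .fneg => 1 | .tand => 2 | .fand => 3 | .timp => 4
  | .fimp => 5 | .tcond => 6 | .fcond => 7 | .tbox => 8 | .fbox => 9
  | .cutr => 10 | .rplus => 11 | .nrm => 12

instance : Countable Tag :=
  ⟨⟨encG, by intro a b h; cases a <;> cases b <;> simp_all [encG]⟩⟩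

abbrev Task := Tag × Fm × Fm × Tm × Tm × Label × Label × Label

/-- The precondition of a task on a branch. -/
def Pre : Task → Set Node → Prop :=
  fun τ B =>
    match τ with
    | (.tneg, φ, _, _, _, x, _, _) => Node.pos φ.snot x ∈ B
    | (.fneg, φ, _, _, _, x, _, _) => Node.neg φ.snot x ∈ B
    | (.tand, φ, ψ, _, _, x, _, _) => Node.pos (φ.and ψ) x ∈ B
    | (.fand, φ, ψ, _, _, x, _, _) => Node.neg (φ.and ψ) x ∈ B
    | (.timp, φ, ψ, _, _, x, y, z) => Node.pos (φ.rimp ψ) x ∈ B ∧ Node.r3 x y z ∈ B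
    | (.fimp, φ, ψ, _, _, x, _, _) => Node.neg (φ.rimp ψ) x ∈ B
    | (.tcond, φ, ψ, _, _, x, y, _) => Node.pos (φ.cond ψ) x ∈ B ∧ Node.rf φ x y ∈ B
    | (.fcond, φ, ψ, _, _, x, _, _) => Node.neg (φ.cond ψ) x ∈ B
    | (.tbox, φ, _, t, _, x, y, _) => Node.pos (Fm.box t φ) x ∈ B ∧ Node.rt t x y ∈ B
    | (.fbox, φ, _, t, _, x, _, _) => Node.neg (Fm.box t φ) x ∈ B
    | (.cutr, φ, _, _, _, x, _, _) =>
        (∃ χ w, Node.pos (φ.cond χ) w ∈ B ∨ Node.neg (φ.cond χ) w ∈ B) ∧ x ∈ LabS B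
    | (.rplus, _, _, s, t, x, y, _) => Node.rt (s.sum t) x y ∈ B
    | (.nrm, _, _, _, _, x, _, _) => x ∈ LabS B

/-- The fulfilment condition of a task on a branch. -/
def Done : Task → Set Node → Prop :=
  fun τ B =>
    match τ with
    | (.tneg, φ, _, _, _, x, _, _) => Node.neg φ x.flip ∈ B
    | (.fneg, φ, _, _, _, x, _, _) => Node.pos φ x.flip ∈ B
    | (.tand, φ, ψ, _, _, x, _, _) => Node.pos φ x ∈ B ∧ Node.pos ψ x ∈ B
    | (.fand, φ, ψ, _, _, x, _, _) => Node.neg φ x ∈ B ∨ Node.neg ψ x ∈ B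
    | (.timp, φ, ψ, _, _, _, y, z) => Node.neg φ y ∈ B ∨ Node.pos ψ z ∈ B
    | (.fimp, φ, ψ, _, _, x, _, _) => ∃ j k : ℕ,
        Node.r3 x (j, false) (k, false) ∈ B ∧ Node.pos φ (j, false) ∈ B ∧
          Node.neg ψ (k, false) ∈ B
    | (.tcond, _, ψ, _, _, _, y, _) => Node.pos ψ y ∈ B
    | (.fcond, φ, ψ, _, _, x, _, _) => ∃ j : ℕ,
        Node.rf φ x (j, false) ∈ B ∧ Node.neg ψ (j, false) ∈ B
    | (.tbox, φ, _, _, _, _, y, _) => Node.pos φ y ∈ B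
    | (.fbox, φ, _, t, _, x, _, _) => ∃ j : ℕ,
        Node.rt t x (j, false) ∈ B ∧ Node.neg φ (j, false) ∈ B
    | (.cutr, φ, _, _, _, x, _, _) =>
        Node.neg φ x ∈ B ∨ (Node.pos φ x ∈ B ∧ Node.rf φ x x ∈ B)
    | (.rplus, _, _, s, t, x, y, _) => Node.rt s x y ∈ B ∧ Node.rt t x y ∈ B
    | (.nrm, _, _, _, _, x, _, _) => Node.r3 Label.zero x x ∈ B

/-- The structural invariants maintained along the construction. -/
def Inv (S : Finset Node) : Prop :=
  (∀ y z, Node.r3 Label.zero y z ∈ S → y = z) ∧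
  (∀ χ y, Node.rf χ Label.zero y ∈ S → Node.pos χ y ∈ S)

/-- A branch is good if it does not close and satisfies the invariants. -/
def GoodB (S : Finset Node) : Prop := ¬ Closes S ∧ Inv S

theorem inv_insert_safe {S : Finset Node} {n : Node} (h : Inv S)
    (hn1 : ∀ y z, n = Node.r3 Label.zero y z → y = z)
    (hn2 : ∀ χ y, n = Node.rf χ Label.zero y → Node.pos χ y ∈ insert n S) :
    Inv (insert n S) := by
  constructor
  · intro y z hm
    rcases Finset.mem_insert.mp hm with h' | h'
    · exact hn1 y z h'.symm
    · exact h.1 y z h'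
  · intro χ y hm
    rcases Finset.mem_insert.mp hm with h' | h'
    · exact hn2 χ y h'.symm
    · exact Finset.mem_insert_of_mem (h.2 χ y h')

theorem inv_insert_pos {S : Finset Node} {φ x} (h : Inv S) :
    Inv (insert (Node.pos φ x) S) :=
  inv_insert_safe h (by intro _ _ h'; cases h') (by intro _ _ h'; cases h')

theorem inv_insert_neg {S : Finset Node} {φ x} (h : Inv S) :
    Inv (insert (Node.neg φ x) S) :=
  inv_insert_safe h (by intro _ _ h'; cases h') (by intro _ _ h'; cases h')

theorem inv_insert_rt {S : Finset Node} {t x y} (h : Inv S) :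
    Inv (insert (Node.rt t x y) S) :=
  inv_insert_safe h (by intro _ _ h'; cases h') (by intro _ _ h'; cases h')

/-- A bound beyond which all integers are fresh for `S`. -/
def bnd (S : Finset Node) : ℕ := (branchLabels S).sup (fun l => l.1) + 1

theorem fresh_of_le {S : Finset Node} {j : ℕ} (h : bnd S ≤ j) : FreshNat j S := by
  intro b hb
  have hle : j ≤ (branchLabels S).sup (fun l => l.1) :=
    Finset.le_sup (f := fun l : Label => l.1) (b := (j, b)) hb
  simp only [bnd] at h
  omega

end JRC
namespace JRC

theorem step (τ : Task) (S : Finset Node) (h : GoodB S) :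
    ∃ S' : Finset Node, S ⊆ S' ∧ GoodB S' ∧ (Pre τ ↑S → Done τ ↑S') := by
  classical
  obtain ⟨g, φ, ψ, s, t, x, y, z⟩ := τ
  by_cases hp : Pre (g, φ, ψ, s, t, x, y, z) ↑S
  swap
  · exact ⟨S, Finset.Subset.refl S, h, fun h' => absurd h' hp⟩
  obtain ⟨hcl, hinv⟩ := h
  cases g with
  | tneg =>
    simp only [Pre, Finset.mem_coe] at hp
    exact ⟨insert (Node.neg φ x.flip) S, Finset.subset_insert _ _,
      ⟨fun hc => hcl (Closes.tNeg hp hc), inv_insert_neg hinv⟩,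
      fun _ => by simp [Done]⟩
  | fneg =>
    simp only [Pre, Finset.mem_coe] at hp
    exact ⟨insert (Node.pos φ x.flip) S, Finset.subset_insert _ _,
      ⟨fun hc => hcl (Closes.fNeg hp hc), inv_insert_pos hinv⟩,
      fun _ => by simp [Done]⟩
  | tand =>
    simp only [Pre, Finset.mem_coe] at hp
    exact ⟨insert (Node.pos φ x) (insert (Node.pos ψ x) S),
      (Finset.subset_insert _ _).trans (Finset.subset_insert _ _),
      ⟨fun hc => hcl (Closes.tAnd hp hc), inv_insert_pos (inv_insert_pos hinv)⟩,
      fun _ => by simp [Done]⟩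
  | fand =>
    simp only [Pre, Finset.mem_coe] at hp
    by_cases hc1 : Closes (insert (Node.neg φ x) S)
    · by_cases hc2 : Closes (insert (Node.neg ψ x) S)
      · exact absurd (Closes.fAnd hp hc1 hc2) hcl
      · exact ⟨insert (Node.neg ψ x) S, Finset.subset_insert _ _,
          ⟨hc2, inv_insert_neg hinv⟩, fun _ => by simp [Done]⟩
    · exact ⟨insert (Node.neg φ x) S, Finset.subset_insert _ _,
        ⟨hc1, inv_insert_neg hinv⟩, fun _ => by simp [Done]⟩
  | timp =>
    simp only [Pre, Finset.mem_coe] at hp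
    by_cases hc1 : Closes (insert (Node.neg φ y) S)
    · by_cases hc2 : Closes (insert (Node.pos ψ z) S)
      · exact absurd (Closes.tImp hp.1 hp.2 hc1 hc2) hcl
      · exact ⟨insert (Node.pos ψ z) S, Finset.subset_insert _ _,
          ⟨hc2, inv_insert_pos hinv⟩, fun _ => by simp [Done]⟩
    · exact ⟨insert (Node.neg φ y) S, Finset.subset_insert _ _,
        ⟨hc1, inv_insert_neg hinv⟩, fun _ => by simp [Done]⟩
  | fimp =>
    simp only [Pre, Finset.mem_coe] at hp
    by_cases hx : x = Label.zero
    · have hf : FreshNat (bnd S) S := fresh_of_le le_rfl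
      refine ⟨insert (Node.r3 x (bnd S, false) (bnd S, false))
          (insert (Node.pos φ (bnd S, false)) (insert (Node.neg ψ (bnd S, false)) S)),
        ((Finset.subset_insert _ _).trans (Finset.subset_insert _ _)).trans
          (Finset.subset_insert _ _), ⟨?_, ?_⟩, fun _ => ?_⟩
      · intro hc
        exact hcl (Closes.fImp hp hf hf (fun _ => rfl) (fun hne => absurd hx hne) hc)
      · refine inv_insert_safe (inv_insert_pos (inv_insert_neg hinv)) ?_ ?_
        · intro y' z' h'
          injection h' with _ h2 h3
          rw [← h2, ← h3]
        · intro _ _ h'; cases h'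
      · exact ⟨bnd S, bnd S, by simp, by simp, by simp⟩
    · have hf1 : FreshNat (bnd S) S := fresh_of_le le_rfl
      have hf2 : FreshNat (bnd S + 1) S := fresh_of_le (Nat.le_succ _)
      refine ⟨insert (Node.r3 x (bnd S, false) (bnd S + 1, false))
          (insert (Node.pos φ (bnd S, false)) (insert (Node.neg ψ (bnd S + 1, false)) S)),
        ((Finset.subset_insert _ _).trans (Finset.subset_insert _ _)).trans
          (Finset.subset_insert _ _), ⟨?_, ?_⟩, fun _ => ?_⟩
      · intro hc
        exact hcl (Closes.fImp hp hf1 hf2 (fun h0 => absurd h0 hx)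
          (fun _ => Nat.ne_of_lt (Nat.lt_succ_self _)) hc)
      · refine inv_insert_safe (inv_insert_pos (inv_insert_neg hinv)) ?_ ?_
        · intro y' z' h'
          injection h' with h1 _ _
          exact absurd h1 hx
        · intro _ _ h'; cases h'
      · exact ⟨bnd S, bnd S + 1, by simp, by simp, by simp⟩
  | tcond =>
    simp only [Pre, Finset.mem_coe] at hp
    exact ⟨insert (Node.pos ψ y) S, Finset.subset_insert _ _,
      ⟨fun hc => hcl (Closes.tCond hp.1 hp.2 hc), inv_insert_pos hinv⟩,
      fun _ => by simp [Done]⟩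
  | fcond =>
    simp only [Pre, Finset.mem_coe] at hp
    have hf : FreshNat (bnd S) S := fresh_of_le le_rfl
    by_cases hx : x = Label.zero
    · subst hx
      refine ⟨insert (Node.rf φ Label.zero (bnd S, false))
          (insert (Node.pos φ (bnd S, false)) (insert (Node.neg ψ (bnd S, false)) S)),
        ((Finset.subset_insert _ _).trans (Finset.subset_insert _ _)).trans
          (Finset.subset_insert _ _), ⟨?_, ?_⟩, fun _ => ?_⟩
      · intro hc
        exact hcl (Closes.fCondZero hp hf hc)
      · refine inv_insert_safe (inv_insert_pos (inv_insert_neg hinv)) ?_ ?_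
        · intro _ _ h'; cases h'
        · intro χ y' h'
          injection h' with h1 _ h3
          rw [← h1, ← h3]
          simp
      · exact ⟨bnd S, by simp, by simp⟩
    · refine ⟨insert (Node.rf φ x (bnd S, false)) (insert (Node.neg ψ (bnd S, false)) S),
        (Finset.subset_insert _ _).trans (Finset.subset_insert _ _), ⟨?_, ?_⟩, fun _ => ?_⟩
      · intro hc
        exact hcl (Closes.fCond hp hx hf hc)
      · refine inv_insert_safe (inv_insert_neg hinv) ?_ ?_
        · intro _ _ h'; cases h'
        · intro χ y' h'
          injection h' with _ h2 _
          exact absurd h2 hx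
      · exact ⟨bnd S, by simp, by simp⟩
  | tbox =>
    simp only [Pre, Finset.mem_coe] at hp
    exact ⟨insert (Node.pos φ y) S, Finset.subset_insert _ _,
      ⟨fun hc => hcl (Closes.tBox hp.1 hp.2 hc), inv_insert_pos hinv⟩,
      fun _ => by simp [Done]⟩
  | fbox =>
    simp only [Pre, Finset.mem_coe] at hp
    have hf : FreshNat (bnd S) S := fresh_of_le le_rfl
    refine ⟨insert (Node.rt s x (bnd S, false)) (insert (Node.neg φ (bnd S, false)) S),
      (Finset.subset_insert _ _).trans (Finset.subset_insert _ _), ⟨?_, ?_⟩, fun _ => ?_⟩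
    · intro hc
      exact hcl (Closes.fBox hp hf hc)
    · exact inv_insert_rt (inv_insert_neg hinv)
    · exact ⟨bnd S, by simp, by simp⟩
  | cutr =>
    simp only [Pre, Finset.mem_coe] at hp
    have hA : IsAntecedent φ S := by
      obtain ⟨χ, w, hw⟩ := hp.1
      exact ⟨χ, w, by simpa using hw⟩
    have hx : x ∈ branchLabels S := mem_LabS_coe.mp hp.2
    by_cases hc1 : Closes (insert (Node.neg φ x) S)
    · by_cases hc2 : Closes (insert (Node.pos φ x) (insert (Node.rf φ x x) S))
      · exact absurd (Closes.cutR hA hx hc1 hc2) hcl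
      · refine ⟨insert (Node.rf φ x x) (insert (Node.pos φ x) S),
          (Finset.subset_insert _ _).trans (Finset.subset_insert _ _), ⟨?_, ?_⟩, fun _ => ?_⟩
        · intro hc
          rw [Finset.insert_comm] at hc
          exact hc2 hc
        · refine inv_insert_safe (inv_insert_pos hinv) ?_ ?_
          · intro _ _ h'; cases h'
          · intro χ y' h'
            injection h' with h1 h2 h3
            rw [← h1, ← h3]
            simp
        · exact Or.inr ⟨by simp, by simp⟩
    · exact ⟨insert (Node.neg φ x) S, Finset.subset_insert _ _,
        ⟨hc1, inv_insert_neg hinv⟩, fun _ => by simp [Done]⟩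
  | rplus =>
    simp only [Pre, Finset.mem_coe] at hp
    exact ⟨insert (Node.rt s x y) (insert (Node.rt t x y) S),
      (Finset.subset_insert _ _).trans (Finset.subset_insert _ _),
      ⟨fun hc => hcl (Closes.rPlus hp hc), inv_insert_rt (inv_insert_rt hinv)⟩,
      fun _ => by simp [Done]⟩
  | nrm =>
    simp only [Pre] at hp
    refine ⟨insert (Node.r3 Label.zero x x) S, Finset.subset_insert _ _, ⟨?_, ?_⟩,
      fun _ => by simp [Done]⟩
    · intro hc
      exact hcl (Closes.norm (mem_LabS_coe.mp hp) hc)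
    · refine inv_insert_safe hinv ?_ ?_
      · intro y' z' h'
        injection h' with _ h2 h3
        rw [← h2, ← h3]
      · intro _ _ h'; cases h'

end JRC
namespace JRC

/-- The systematic saturation chain. -/
noncomputable def chain (e : ℕ → Task) (root : Finset Node) (hr : GoodB root) :
    ℕ → {S : Finset Node // GoodB S}
  | 0 => ⟨root, hr⟩
  | n + 1 =>
      ⟨(step (e (Nat.unpair n).1) (chain e root hr n).1 (chain e root hr n).2).choose,
        (step (e (Nat.unpair n).1) (chain e root hr n).1
          (chain e root hr n).2).choose_spec.2.1⟩

variable {e : ℕ → Task} {root : Finset Node} {hr : GoodB root}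

theorem chain_mono {m n : ℕ} (h : m ≤ n) :
    (chain e root hr m).1 ⊆ (chain e root hr n).1 := by
  induction n with
  | zero => rw [Nat.le_zero.mp h]
  | succ n ih =>
    rcases Nat.lt_or_ge m (n + 1) with h' | h'
    · have hstep : (chain e root hr n).1 ⊆ (chain e root hr (n + 1)).1 :=
        (step (e (Nat.unpair n).1) (chain e root hr n).1 (chain e root hr n).2).choose_spec.1
      exact (ih (Nat.lt_succ_iff.mp h')).trans hstep
    · rw [Nat.le_antisymm h h']

theorem chain_done (n : ℕ) :
    Pre (e (Nat.unpair n).1) ↑(chain e root hr n).1 →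
      Done (e (Nat.unpair n).1) ↑(chain e root hr (n + 1)).1 :=
  (step (e (Nat.unpair n).1) (chain e root hr n).1 (chain e root hr n).2).choose_spec.2.2

/-- The limit branch. -/
def Bset (e : ℕ → Task) (root : Finset Node) (hr : GoodB root) : Set Node :=
  ⋃ n, ↑(chain e root hr n).1

theorem mem_Bset {a : Node} : a ∈ Bset e root hr ↔ ∃ n, a ∈ (chain e root hr n).1 := by
  simp [Bset]

theorem chain_subset_Bset (n : ℕ) : ↑(chain e root hr n).1 ⊆ Bset e root hr :=
  Set.subset_iUnion (fun n => ((chain e root hr n).1 : Set Node)) n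

theorem pre_mono {τ : Task} {B B' : Set Node} (hsub : B ⊆ B') (hp : Pre τ B) :
    Pre τ B' := by
  obtain ⟨g, φ, ψ, s, t, x, y, z⟩ := τ
  cases g <;> simp only [Pre] at hp ⊢
  case timp => exact ⟨hsub hp.1, hsub hp.2⟩
  case tcond => exact ⟨hsub hp.1, hsub hp.2⟩
  case tbox => exact ⟨hsub hp.1, hsub hp.2⟩
  case cutr =>
    obtain ⟨⟨χ, w, hw⟩, hx⟩ := hp
    exact ⟨⟨χ, w, hw.imp (fun h => hsub h) (fun h => hsub h)⟩, LabS_mono hsub hx⟩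
  case nrm => exact LabS_mono hsub hp
  all_goals exact hsub hp

theorem done_mono {τ : Task} {B B' : Set Node} (hsub : B ⊆ B') (hp : Done τ B) :
    Done τ B' := by
  obtain ⟨g, φ, ψ, s, t, x, y, z⟩ := τ
  cases g <;> simp only [Done] at hp ⊢
  case tand => exact ⟨hsub hp.1, hsub hp.2⟩
  case fand => exact hp.imp (fun h => hsub h) (fun h => hsub h)
  case timp => exact hp.imp (fun h => hsub h) (fun h => hsub h)
  case fimp =>
    obtain ⟨j, k, h1, h2, h3⟩ := hp
    exact ⟨j, k, hsub h1, hsub h2, hsub h3⟩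
  case fcond =>
    obtain ⟨j, h1, h2⟩ := hp
    exact ⟨j, hsub h1, hsub h2⟩
  case fbox =>
    obtain ⟨j, h1, h2⟩ := hp
    exact ⟨j, hsub h1, hsub h2⟩
  case cutr => exact hp.imp (fun h => hsub h) (fun h => ⟨hsub h.1, hsub h.2⟩)
  case rplus => exact ⟨hsub hp.1, hsub hp.2⟩
  all_goals exact hsub hp

theorem labS_Bset {x : Label} (hx : x ∈ LabS (Bset e root hr)) :
    ∃ n, x ∈ LabS ↑(chain e root hr n).1 := by
  obtain ⟨a, ha, hax⟩ := hx
  obtain ⟨n, hn⟩ := mem_Bset.mp ha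
  exact ⟨n, a, hn, hax⟩

theorem pre_chain {τ : Task} (hp : Pre τ (Bset e root hr)) :
    ∃ n, Pre τ ↑(chain e root hr n).1 := by
  obtain ⟨g, φ, ψ, s, t, x, y, z⟩ := τ
  cases g <;> simp only [Pre] at hp ⊢
  case timp =>
    obtain ⟨n1, h1⟩ := mem_Bset.mp hp.1
    obtain ⟨n2, h2⟩ := mem_Bset.mp hp.2
    exact ⟨max n1 n2, chain_mono (le_max_left _ _) h1, chain_mono (le_max_right _ _) h2⟩
  case tcond =>
    obtain ⟨n1, h1⟩ := mem_Bset.mp hp.1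
    obtain ⟨n2, h2⟩ := mem_Bset.mp hp.2
    exact ⟨max n1 n2, chain_mono (le_max_left _ _) h1, chain_mono (le_max_right _ _) h2⟩
  case tbox =>
    obtain ⟨n1, h1⟩ := mem_Bset.mp hp.1
    obtain ⟨n2, h2⟩ := mem_Bset.mp hp.2
    exact ⟨max n1 n2, chain_mono (le_max_left _ _) h1, chain_mono (le_max_right _ _) h2⟩
  case cutr =>
    obtain ⟨⟨χ, w, hw⟩, hx⟩ := hp
    obtain ⟨n2, h2⟩ := labS_Bset hx
    rcases hw with hw | hw
    · obtain ⟨n1, h1⟩ := mem_Bset.mp hw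
      exact ⟨max n1 n2, ⟨χ, w, Or.inl (chain_mono (le_max_left _ _) h1)⟩,
        LabS_mono (Finset.coe_subset.mpr (chain_mono (le_max_right _ _))) h2⟩
    · obtain ⟨n1, h1⟩ := mem_Bset.mp hw
      exact ⟨max n1 n2, ⟨χ, w, Or.inr (chain_mono (le_max_left _ _) h1)⟩,
        LabS_mono (Finset.coe_subset.mpr (chain_mono (le_max_right _ _))) h2⟩
  case nrm => exact labS_Bset hp
  all_goals
    obtain ⟨n, hn⟩ := mem_Bset.mp hp
    exact ⟨n, hn⟩

theorem sat_task (he : Function.Surjective e) (τ : Task)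
    (hp : Pre τ (Bset e root hr)) : Done τ (Bset e root hr) := by
  obtain ⟨m, hm⟩ := pre_chain hp
  obtain ⟨a, ha⟩ := he τ
  have hsub : (chain e root hr m).1 ⊆ (chain e root hr (Nat.pair a m)).1 :=
    chain_mono (Nat.right_le_pair a m)
  have hp2 : Pre τ ↑(chain e root hr (Nat.pair a m)).1 :=
    pre_mono (Finset.coe_subset.mpr hsub) hm
  have hd := chain_done (e := e) (root := root) (hr := hr) (Nat.pair a m)
  rw [Nat.unpair_pair, ha] at hd
  exact done_mono (chain_subset_Bset _) (hd hp2)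

end JRC
namespace JRC

theorem hin_Bset {e : ℕ → Task} {root : Finset Node} {hr : GoodB root}
    (he : Function.Surjective e) : Hin (Bset e root hr) := by
  have hs : ∀ τ, Pre τ (Bset e root hr) → Done τ (Bset e root hr) := sat_task he
  refine ⟨?_, ?_, ?_, ?_, ?_, ?_, ?_, ?_, ?_, ?_, ?_, ?_, ?_, ?_, ?_, ?_⟩
  · intro φ x h1 h2
    obtain ⟨n1, hn1⟩ := mem_Bset.mp h1
    obtain ⟨n2, hn2⟩ := mem_Bset.mp h2
    exact (chain e root hr (max n1 n2)).2.1
      (Closes.contra (chain_mono (le_max_left _ _) hn1)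
        (chain_mono (le_max_right _ _) hn2))
  · intro y z hm
    obtain ⟨n, hn⟩ := mem_Bset.mp hm
    exact (chain e root hr n).2.2.1 y z hn
  · intro χ y hm
    obtain ⟨n, hn⟩ := mem_Bset.mp hm
    exact chain_subset_Bset n ((chain e root hr n).2.2.2 χ y hn)
  · exact fun φ x h => hs (Tag.tneg, φ, φ, Tm.var 0, Tm.var 0, x, x, x) h
  · exact fun φ x h => hs (Tag.fneg, φ, φ, Tm.var 0, Tm.var 0, x, x, x) h
  · exact fun φ ψ x h => hs (Tag.tand, φ, ψ, Tm.var 0, Tm.var 0, x, x, x) h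
  · exact fun φ ψ x h => hs (Tag.fand, φ, ψ, Tm.var 0, Tm.var 0, x, x, x) h
  · exact fun φ ψ x y z h1 h2 => hs (Tag.timp, φ, ψ, Tm.var 0, Tm.var 0, x, y, z) ⟨h1, h2⟩
  · intro φ ψ x h
    obtain ⟨j, k, h1, h2, h3⟩ := hs (Tag.fimp, φ, ψ, Tm.var 0, Tm.var 0, x, x, x) h
    exact ⟨(j, false), (k, false), h1, h2, h3⟩
  · exact fun φ ψ x y h1 h2 => hs (Tag.tcond, φ, ψ, Tm.var 0, Tm.var 0, x, y, x) ⟨h1, h2⟩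
  · intro φ ψ x h
    obtain ⟨j, h1, h2⟩ := hs (Tag.fcond, φ, ψ, Tm.var 0, Tm.var 0, x, x, x) h
    exact ⟨(j, false), h1, h2⟩
  · exact fun t φ x y h1 h2 => hs (Tag.tbox, φ, φ, t, t, x, y, x) ⟨h1, h2⟩
  · intro t φ x h
    obtain ⟨j, h1, h2⟩ := hs (Tag.fbox, φ, φ, t, t, x, x, x) h
    exact ⟨(j, false), h1, h2⟩
  · exact fun φ x hA hx => hs (Tag.cutr, φ, φ, Tm.var 0, Tm.var 0, x, x, x) ⟨hA, hx⟩
  · exact fun s t x y h => hs (Tag.rplus, Fm.atom 0, Fm.atom 0, s, t, x, y, x) h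
  · exact fun x hx => hs (Tag.nrm, Fm.atom 0, Fm.atom 0, Tm.var 0, Tm.var 0, x, x, x) hx

end JRC

open JRC in
/-- Completeness of the JRC tableau system: if T ⊨_JRC φ for a finite
set of premises T, then there is a closed tableau for φ from T. -/
theorem stmt_18 (T : Finset Fm) (φ : Fm) (h : Conseq (↑T : Set Fm) φ) :
    TabProv T φ := by
  by_contra hnp
  rw [TabProv] at hnp
  set root : Finset Node :=
    insert (Node.neg φ Label.zero) (T.image fun ψ => Node.pos ψ Label.zero) with hrootdef
  have hr : GoodB root := by
    refine ⟨hnp, ?_, ?_⟩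
    · intro y z hm
      rcases Finset.mem_insert.mp hm with h' | h'
      · cases h'
      · obtain ⟨ψ', _, h''⟩ := Finset.mem_image.mp h'
        cases h''
    · intro χ y hm
      rcases Finset.mem_insert.mp hm with h' | h'
      · cases h'
      · obtain ⟨ψ', _, h''⟩ := Finset.mem_image.mp h'
        cases h''
  have : Nonempty JRC.Task :=
    ⟨(Tag.tneg, Fm.atom 0, Fm.atom 0, Tm.var 0, Tm.var 0, Label.zero, Label.zero,
      Label.zero)⟩
  obtain ⟨e, he⟩ := exists_surjective_nat JRC.Task
  have hin : Hin (Bset e root hr) := hin_Bset he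
  have hroot_sub : (root : Set Node) ⊆ Bset e root hr := chain_subset_Bset 0
  have hzero_mem : Node.neg φ Label.zero ∈ Bset e root hr :=
    hroot_sub (by simp [hrootdef])
  have h0 : Label.zero ∈ LabS (Bset e root hr) := neg_labs hzero_mem
  have hne := (truth hin φ Label.zero).2 hzero_mem
  apply hne
  have hsat := h (mdl _ hin h0) (mdl_isModel _ hin h0) ⟨Label.zero, h0⟩ rfl ?_
  · exact (sat_iff_val _ hin h0 φ ⟨Label.zero, h0⟩).1 hsat
  · intro ψ hψ
    have hmem : Node.pos ψ Label.zero ∈ Bset e root hr := by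
      refine hroot_sub ?_
      simp only [hrootdef, Finset.coe_insert, Set.mem_insert_iff, Finset.mem_coe]
      exact Or.inr (Finset.mem_image_of_mem _ (by simpa using hψ))
    exact (sat_iff_val _ hin h0 ψ ⟨Label.zero, h0⟩).2 ((truth hin ψ Label.zero).1 hmem)
end

section
/- Counterpossibles are not valid in JRC: for atomic propositions p and q, neither (p ∧ ∼p) ⇝ q nor q ⇝ (p ∨ ∼p) is JRC-valid (where φ∨ψ := ∼(∼φ∧∼ψ)). -/
namespace JRC

/-- Evaluation in our concrete countermodel. -/
def ev (p q : ℕ) : Fm → Bool → Prop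
  | .atom r, w => (r = p ∧ w = true) ∨ (r = q ∧ w = false)
  | .snot φ, w => ¬ ev p q φ (!w)
  | .and φ ψ, w => ev p q φ w ∧ ev p q ψ w
  | .rimp φ ψ, _ => ∀ v u : Bool, v = u → ev p q φ v → ev p q ψ u
  | .cond φ ψ, _ => ∀ v : Bool, ev p q φ v → ev p q ψ v
  | .box _ φ, _ => ∀ v : Bool, False → ev p q φ v

/-- The concrete countermodel. -/
def Mdl (p q : ℕ) : Model where
  W := Bool
  N := Set.univ
  N_nonempty := ⟨true, trivial⟩
  R := fun _ v u => v = u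
  normality := by intros; simp
  Rf := fun φ _ v => ev p q φ v
  Rt := fun _ _ _ => False
  star := Bool.not
  star_star := Bool.not_not
  V := fun r => {w | (r = p ∧ w = true) ∨ (r = q ∧ w = false)}

lemma sat_iff (p q : ℕ) : ∀ (φ : Fm) (w : Bool), Sat (Mdl p q) φ w ↔ ev p q φ w := by
  intro φ
  induction φ with
  | atom r => intro w; rfl
  | snot φ ih => intro w; simp only [Sat, ev, ih]; exact not_congr (ih _)
  | and φ ψ ihφ ihψ => intro w; simp only [Sat, ev, ihφ, ihψ]
  | rimp φ ψ ihφ ihψ =>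
      intro w
      constructor
      · intro h v u hvu hφ; exact (ihψ u).1 (h v u hvu ((ihφ v).2 hφ))
      · intro h v u hvu hφ; exact (ihψ u).2 (h v u hvu ((ihφ v).1 hφ))
  | cond φ ψ ihφ ihψ =>
      intro w
      constructor
      · intro h v hφ; exact (ihψ v).1 (h v hφ)
      · intro h v hφ; exact (ihψ v).2 (h v hφ)
  | box t φ ih =>
      intro w
      constructor
      · intro _ v hf; exact hf.elim
      · intro h v hf; exact hf.elim

lemma isModel (p q : ℕ) : IsModel (Mdl p q) := by
  refine ⟨?_, ?_, ?_⟩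
  · intro φ w _ v hv; exact (sat_iff p q φ v).2 hv
  · intro φ w hw; exact (sat_iff p q φ w).1 hw
  · intro s t w v h; exact h.elim

end JRC

open JRC in
/-- counterpossibles are not valid in JRC: for distinct atomic
propositions p and q, neither (p ∧ ∼p) ⇝ q nor q ⇝ (p ∨ ∼p) is JRC-valid. -/
theorem stmt_19 (p q : ℕ) (hpq : p ≠ q) :
    ¬ Valid (((Fm.atom p).and (Fm.snot (Fm.atom p))).cond (Fm.atom q)) ∧
    ¬ Valid ((Fm.atom q).cond (orF (Fm.atom p) (Fm.snot (Fm.atom p)))) := by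
  constructor
  · intro hval
    have h := hval (Mdl p q) (isModel p q) true trivial
    rw [sat_iff] at h
    have : ev p q (Fm.atom q) true := by
      apply h true
      exact ⟨Or.inl ⟨rfl, rfl⟩, fun hc => by
        rcases hc with ⟨h1, h2⟩ | ⟨h1, h2⟩
        · simp at h2
        · exact hpq h1⟩
    rcases this with ⟨h1, _⟩ | ⟨_, h2⟩
    · exact hpq h1.symm
    · simp at h2
  · intro hval
    have h := hval (Mdl p q) (isModel p q) true trivial
    rw [sat_iff] at h
    have hq : ev p q (Fm.atom q) false := Or.inr ⟨rfl, rfl⟩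
    have := h false hq
    -- this : ev p q (orF ...) false, i.e. ¬ ev (∼p ∧ ∼∼p) true
    apply this
    refine ⟨?_, ?_⟩
    · -- ev (∼ atom p) true : ¬ ev (atom p) false
      intro hc
      rcases hc with ⟨_, h2⟩ | ⟨h1, _⟩
      · simp at h2
      · exact hpq h1
    · -- ev (∼∼ atom p) true : ¬¬ ev (atom p) true
      intro hc
      exact hc (Or.inl ⟨rfl, rfl⟩)
end
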